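/- arXiv:2604.24183 — 8 statements merged into one kernel-verified Lean document; each statement's English description precedes it below -/
import Mathlib

section
/- For every finite simple graph G without isolated edges, χ'_sCF(G) ≤ χ'_CF(G) ≤ χ'_sCF(G) + 1. -/
open SimpleGraph

variable {V : Type*}

/-- The closed edge-neighborhood of an edge `uv`: all edges incident to `u` or `v`. -/
def edgeNbhd (G : SimpleGraph V) (u v : V) : Set (Sym2 V) :=
  G.incidenceSet u ∪ G.incidenceSet v

/-- An edge `uv` is satisfied by a partial edge coloring `φ` if some color appears
exactly once among the colored edges incident to `u` or `v`. -/
def Satisfied (G : SimpleGraph V) (φ : Sym2 V → Option ℕ) (u v : V) : Prop :=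
  ∃ c : ℕ, {e | e ∈ edgeNbhd G u v ∧ φ e = some c}.ncard = 1

/-- A partial edge coloring of `G` with `k` colors such that every edge of `G` is satisfied. -/
def IsPartialSCF (G : SimpleGraph V) (k : ℕ) (φ : Sym2 V → Option ℕ) : Prop :=
  (∀ e c, φ e = some c → e ∈ G.edgeSet ∧ c < k) ∧
  ∀ ⦃u v⦄, G.Adj u v → Satisfied G φ u v

/-- `χ'_sCF(G)`. -/
noncomputable def sCFIndex (G : SimpleGraph V) : ℕ :=
  sInf {k | ∃ φ, IsPartialSCF G k φ}

/-- A (total) conflict-free edge coloring of `G` with `k` colors. -/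
def IsCF (G : SimpleGraph V) (k : ℕ) (φ : Sym2 V → ℕ) : Prop :=
  (∀ e ∈ G.edgeSet, φ e < k) ∧
  ∀ ⦃u v⦄, G.Adj u v → ∃ c : ℕ, {e | e ∈ edgeNbhd G u v ∧ φ e = c}.ncard = 1

/-- `χ'_CF(G)`, the conflict-free chromatic index. -/
noncomputable def cfIndex (G : SimpleGraph V) : ℕ :=
  sInf {k | ∃ φ, IsCF G k φ}

/-- The neighborhood of a set of vertices. -/
def NbhdSet (G : SimpleGraph V) (S : Set V) : Set V :=
  ⋃ x ∈ S, G.neighborSet x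

/-- The set of private neighbors of `x` with respect to `D`. -/
def privNbrs (G : SimpleGraph V) (D : Set V) (x : V) : Set V :=
  {y ∈ G.neighborSet x | G.neighborSet y ∩ D = {x}}

/-- The number of edges of `F` incident to `v`. -/
noncomputable def edegOn (F : Set (Sym2 V)) (v : V) : ℕ :=
  {e ∈ F | v ∈ e}.ncard

lemma edgeNbhd_subset_edgeSet (G : SimpleGraph V) (u v : V) :
    edgeNbhd G u v ⊆ G.edgeSet := by
  intro e he
  rcases he with h | h
  · exact h.1
  · exact h.1

lemma cf_nonempty [Fintype V] (G : SimpleGraph V) :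
    {k | ∃ φ, IsCF G k φ}.Nonempty := by
  classical
  set eqv := Fintype.equivFin (Sym2 V)
  refine ⟨Fintype.card (Sym2 V), fun e => (eqv e).val, fun e _ => (eqv e).isLt, ?_⟩
  intro u v huv
  refine ⟨(eqv s(u, v)).val, ?_⟩
  have hmem : s(u, v) ∈ edgeNbhd G u v :=
    Or.inl ⟨huv, Sym2.mem_mk_left u v⟩
  have : {e | e ∈ edgeNbhd G u v ∧ (eqv e).val = (eqv s(u,v)).val} = {s(u, v)} := by
    ext e
    simp only [Set.mem_setOf_eq, Set.mem_singleton_iff]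
    constructor
    · rintro ⟨-, h⟩
      exact eqv.injective (Fin.ext h)
    · rintro rfl; exact ⟨hmem, rfl⟩
  rw [this, Set.ncard_singleton]

lemma cf_to_partial (G : SimpleGraph V) (k : ℕ) (φ : Sym2 V → ℕ)
    (h : IsCF G k φ) : ∃ ψ, IsPartialSCF G k ψ := by
  classical
  refine ⟨fun e => if e ∈ G.edgeSet then some (φ e) else none, ?_, ?_⟩
  · intro e c hc
    by_cases he : e ∈ G.edgeSet
    · simp only [he, if_pos] at hc
      exact ⟨he, Option.some.inj hc ▸ h.1 e he⟩
    · simp [he] at hc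
  · intro u v huv
    obtain ⟨c, hc⟩ := h.2 huv
    refine ⟨c, ?_⟩
    have : {e | e ∈ edgeNbhd G u v ∧
        (if e ∈ G.edgeSet then some (φ e) else none) = some c}
        = {e | e ∈ edgeNbhd G u v ∧ φ e = c} := by
      ext e
      simp only [Set.mem_setOf_eq, and_congr_right_iff]
      intro he
      rw [if_pos (edgeNbhd_subset_edgeSet G u v he)]
      simp
    rw [this, hc]

lemma partial_to_cf (G : SimpleGraph V) (k : ℕ) (φ : Sym2 V → Option ℕ)
    (h : IsPartialSCF G k φ) : ∃ ψ, IsCF G (k + 1) ψ := by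
  classical
  refine ⟨fun e => (φ e).getD k, ?_, ?_⟩
  · intro e _
    cases hφ : φ e with
    | none => simp [hφ]
    | some c => simp [hφ]; exact Nat.le_of_lt (h.1 e c hφ).2
  · intro u v huv
    obtain ⟨c, hc⟩ := h.2 huv
    have hck : c < k := by
      obtain ⟨e0, he0⟩ := Set.ncard_eq_one.mp hc
      have : e0 ∈ {e | e ∈ edgeNbhd G u v ∧ φ e = some c} := he0 ▸ rfl
      exact (h.1 e0 c this.2).2
    refine ⟨c, ?_⟩
    have : {e | e ∈ edgeNbhd G u v ∧ (φ e).getD k = c}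
        = {e | e ∈ edgeNbhd G u v ∧ φ e = some c} := by
      ext e
      simp only [Set.mem_setOf_eq, and_congr_right_iff]
      intro _
      cases hφ : φ e with
      | none => simp; exact fun h' => absurd (h' ▸ hck) (lt_irrefl k)
      | some c' => simp
    rw [this, hc]

theorem stmt_3 [Fintype V] (G : SimpleGraph V)
    (hnoIsolEdge : ∀ ⦃u v⦄, G.Adj u v →
      ∃ w, w ≠ u ∧ w ≠ v ∧ (G.Adj u w ∨ G.Adj v w)) :
    sCFIndex G ≤ cfIndex G ∧ cfIndex G ≤ sCFIndex G + 1 := by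
  classical
  have hcf := Nat.sInf_mem (cf_nonempty G)
  obtain ⟨φ, hφ⟩ : ∃ φ, IsCF G (cfIndex G) φ := hcf
  have h1 : sCFIndex G ≤ cfIndex G :=
    Nat.sInf_le (cf_to_partial G _ φ hφ)
  have hscfne : {k | ∃ ψ, IsPartialSCF G k ψ}.Nonempty :=
    ⟨cfIndex G, cf_to_partial G _ φ hφ⟩
  obtain ⟨ψ, hψ⟩ : ∃ ψ, IsPartialSCF G (sCFIndex G) ψ := Nat.sInf_mem hscfne
  exact ⟨h1, Nat.sInf_le (partial_to_cf G _ ψ hψ)⟩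
end

section
/- If G is a bipartite graph without isolated vertices, then χ'_sCF(G) ≤ 2, i.e., there exists a partial edge coloring of G with 2 colors such that every edge of G is satisfied. -/
open SimpleGraph

variable {V : Type*}

theorem stmt_4 [Fintype V] (G : SimpleGraph V) (hbip : G.Colorable 2)
    (hiso : ∀ v : V, ∃ u, G.Adj v u) :
    ∃ φ : Sym2 V → Option ℕ, IsPartialSCF G 2 φ := by
  classical
  obtain ⟨C⟩ := hbip
  have hfin2 : ∀ i : Fin 2, i = 0 ∨ i = 1 := by decide
  -- there is a subset of the color-0 side dominating the color-1 side
  have hP : ∃ n : ℕ, ∃ Df : Finset V,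
      ((∀ x ∈ Df, C x = 0) ∧ ∀ v, C v = 1 → ∃ x ∈ Df, G.Adj x v) ∧ Df.card = n := by
    refine ⟨_, Finset.univ.filter (fun x => C x = 0), ⟨⟨?_, ?_⟩, rfl⟩⟩
    · intro x hx; simpa using hx
    · intro v hv
      obtain ⟨u, hu⟩ := hiso v
      have hne : C v ≠ C u := C.valid hu
      have hu0 : C u = 0 := by
        rcases hfin2 (C u) with h | h
        · exact h
        · exact absurd (hv.trans h.symm) hne
      exact ⟨u, by simpa using hu0, hu.symm⟩
  set n0 := Nat.find hP with hn0
  obtain ⟨D, ⟨hDA, hDdom⟩, hDcard⟩ := Nat.find_spec hP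
  -- every element of a minimum dominating set has a private neighbor
  have hpriv : ∀ x, x ∈ D → ∃ y, C y = 1 ∧ G.Adj x y ∧ ∀ x' ∈ D, G.Adj x' y → x' = x := by
    intro x hx
    by_contra hcon
    push_neg at hcon
    have herase : ∃ Df : Finset V,
        ((∀ z ∈ Df, C z = 0) ∧ ∀ v, C v = 1 → ∃ x' ∈ Df, G.Adj x' v) ∧ Df.card = n0 - 1 := by
      refine ⟨D.erase x, ⟨fun z hz => hDA z (Finset.mem_of_mem_erase hz), ?_⟩,
        by rw [Finset.card_erase_of_mem hx, hDcard]⟩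
      intro v hv
      obtain ⟨x'', hx'', hadj''⟩ := hDdom v hv
      by_cases hxx : x'' = x
      · subst hxx
        obtain ⟨x', hx', hadj', hne'⟩ := hcon v hv hadj''
        exact ⟨x', Finset.mem_erase.2 ⟨hne', hx'⟩, hadj'⟩
      · exact ⟨x'', Finset.mem_erase.2 ⟨hxx, hx''⟩, hadj''⟩
    have hlt : n0 - 1 < n0 := by
      have hpos : 0 < D.card := Finset.card_pos.2 ⟨x, hx⟩
      omega
    exact Nat.find_min hP hlt herase
  choose! p hp1 hp2 hp3 using hpriv
  have hdom' : ∀ v, C v = 1 → ∃ x, x ∈ D ∧ G.Adj x v := by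
    intro v hv; obtain ⟨x, hx, h⟩ := hDdom v hv; exact ⟨x, hx, h⟩
  choose! d hd1 hd2 using hdom'
  set Pf : Finset V := D.image p with hPfdef
  set φ : Sym2 V → Option ℕ := fun e =>
    if ∃ x ∈ D, e = s(x, p x) then some 0
    else if ∃ w, C w = 1 ∧ w ∉ Pf ∧ e = s(d w, w) then some 1
    else none with hφdef
  have hφ0 : ∀ e, φ e = some 0 → ∃ x ∈ D, e = s(x, p x) := by
    intro e he
    simp only [hφdef] at he
    split_ifs at he with h1 h2
    · exact h1
    · exact absurd he (by simp)
  have hφ1 : ∀ e, φ e = some 1 → ∃ w, C w = 1 ∧ w ∉ Pf ∧ e = s(d w, w) := by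
    intro e he
    simp only [hφdef] at he
    split_ifs at he with h1 h2
    · exact absurd he (by simp)
    · exact h2
  have hmemnb : ∀ u v e, e ∈ edgeNbhd G u v → u ∈ e ∨ v ∈ e := by
    intro u v e he
    rcases he with h | h
    · exact Or.inl h.2
    · exact Or.inr h.2
  have key : ∀ u v, G.Adj u v → C u = 0 → C v = 1 →
      ∃ c : ℕ, {e | e ∈ edgeNbhd G u v ∧ φ e = some c}.ncard = 1 := by
    intro u v huv hu hv
    by_cases hud : u ∈ D
    · -- color 0, unique edge s(u, p u)
      refine ⟨0, ?_⟩
      have hset : {e | e ∈ edgeNbhd G u v ∧ φ e = some 0} = {s(u, p u)} := by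
        ext e
        simp only [Set.mem_setOf_eq, Set.mem_singleton_iff]
        constructor
        · rintro ⟨hnb, he⟩
          obtain ⟨x, hx, rfl⟩ := hφ0 e he
          have hxu : x = u := by
            rcases hmemnb u v _ hnb with h | h
            · rcases Sym2.mem_iff.1 h with h' | h'
              · exact h'.symm
              · rw [h', hp1 x hx] at hu; exact absurd hu (by decide)
            · rcases Sym2.mem_iff.1 h with h' | h'
              · rw [h', hDA x hx] at hv; exact absurd hv (by decide)
              · exact (hp3 x hx u hud (by rwa [← h'])).symm
          rw [hxu]
        · rintro rfl
          refine ⟨Or.inl ((G.mk'_mem_incidenceSet_left_iff).2 (hp2 u hud)), ?_⟩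
          simp only [hφdef]
          rw [if_pos ⟨u, hud, rfl⟩]
      rw [hset]; exact Set.ncard_singleton _
    by_cases hvP : v ∈ Pf
    · -- color 0, unique edge s(x, v) where v = p x
      obtain ⟨x, hxD, hxv⟩ := Finset.mem_image.1 hvP
      have hxvAdj : G.Adj x v := by rw [← hxv]; exact hp2 x hxD
      refine ⟨0, ?_⟩
      have hset : {e | e ∈ edgeNbhd G u v ∧ φ e = some 0} = {s(x, v)} := by
        ext e
        simp only [Set.mem_setOf_eq, Set.mem_singleton_iff]
        constructor
        · rintro ⟨hnb, he⟩
          obtain ⟨x', hx', rfl⟩ := hφ0 e he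
          have hxx : x' = x := by
            rcases hmemnb u v _ hnb with h | h
            · rcases Sym2.mem_iff.1 h with h' | h'
              · exact absurd hx' (h' ▸ hud)
              · rw [h', hp1 x' hx'] at hu; exact absurd hu (by decide)
            · rcases Sym2.mem_iff.1 h with h' | h'
              · rw [h', hDA x' hx'] at hv; exact absurd hv (by decide)
              · exact (hp3 x' hx' x hxD (by rw [← h']; exact hxvAdj)).symm
          rw [hxx, hxv]
        · rintro rfl
          refine ⟨Or.inr ((G.mk'_mem_incidenceSet_right_iff).2 hxvAdj), ?_⟩
          simp only [hφdef]
          rw [if_pos ⟨x, hxD, by rw [hxv]⟩]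
      rw [hset]; exact Set.ncard_singleton _
    · -- color 1, unique edge s(d v, v)
      have hdvD : d v ∈ D := hd1 v hv
      have hdvAdj : G.Adj (d v) v := hd2 v hv
      refine ⟨1, ?_⟩
      have hset : {e | e ∈ edgeNbhd G u v ∧ φ e = some 1} = {s(d v, v)} := by
        ext e
        simp only [Set.mem_setOf_eq, Set.mem_singleton_iff]
        constructor
        · rintro ⟨hnb, he⟩
          obtain ⟨w, hw1, hw2, rfl⟩ := hφ1 e he
          have hwv : w = v := by
            rcases hmemnb u v _ hnb with h | h
            · rcases Sym2.mem_iff.1 h with h' | h'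
              · exact absurd (hd1 w hw1) (h' ▸ hud)
              · rw [h', hw1] at hu; exact absurd hu (by decide)
            · rcases Sym2.mem_iff.1 h with h' | h'
              · rw [h', hDA _ (hd1 w hw1)] at hv; exact absurd hv (by decide)
              · exact h'.symm
          rw [hwv]
        · rintro rfl
          refine ⟨Or.inr ((G.mk'_mem_incidenceSet_right_iff).2 hdvAdj), ?_⟩
          simp only [hφdef]
          rw [if_neg, if_pos ⟨v, hv, hvP, rfl⟩]
          rintro ⟨x, hx, heq⟩
          rcases Sym2.eq_iff.1 heq with ⟨h1, h2⟩ | ⟨h1, h2⟩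
          · exact hvP (Finset.mem_image.2 ⟨x, hx, h2.symm⟩)
          · rw [h2, hDA x hx] at hv; exact absurd hv (by decide)
      rw [hset]; exact Set.ncard_singleton _
  refine ⟨φ, ?_, ?_⟩
  · intro e c he
    simp only [hφdef] at he
    split_ifs at he with h1 h2
    · obtain ⟨x, hx, rfl⟩ := h1
      have hc : c = 0 := by simpa using he.symm
      exact ⟨(G.mem_edgeSet).2 (hp2 x hx), by omega⟩
    · obtain ⟨w, hw1, hw2, rfl⟩ := h2
      have hc : c = 1 := by simpa using he.symm
      exact ⟨(G.mem_edgeSet).2 (hd2 w hw1), by omega⟩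
  · intro u v hadj
    have hne : C u ≠ C v := C.valid hadj
    have hsymm : edgeNbhd G u v = edgeNbhd G v u := by
      unfold edgeNbhd; exact Set.union_comm _ _
    rcases hfin2 (C u) with hu | hu <;> rcases hfin2 (C v) with hv | hv
    · exact absurd (hu.trans hv.symm) hne
    · exact key u v hadj hu hv
    · obtain ⟨c, hc⟩ := key v u hadj.symm hv hu
      exact ⟨c, by rw [hsymm]; exact hc⟩
    · exact absurd (hu.trans hv.symm) hne
end

section
/- If G is a bipartite graph without isolated vertices, then χ'_CF(G) ≤ 3, i.e., G admits an edge coloring with 3 colors such that for every edge uv, some color appears exactly once on the edges incident to u or v. -/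
open SimpleGraph

variable {V : Type*}

theorem stmt_5 [Fintype V] (G : SimpleGraph V) (hbip : G.Colorable 2)
    (hiso : ∀ v : V, ∃ u, G.Adj v u) :
    ∃ φ : Sym2 V → ℕ, IsCF G 3 φ := by
  classical
  obtain ⟨col⟩ := hbip
  have hcol : ∀ {u v : V}, G.Adj u v → col u = 0 → col v = 1 := by
    intro u v h hu
    have := col.valid h
    omega
  have hcol' : ∀ {u v : V}, G.Adj u v → col u ≠ 0 → col u = 1 ∧ col v = 0 := by
    intro u v h hu
    have := col.valid h
    omega
  -- dominating sets of side B inside side A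
  set P : Finset V → Prop :=
    fun S => (∀ x ∈ S, col x = 0) ∧ ∀ b : V, col b = 1 → ∃ x ∈ S, G.Adj x b with hP
  have hPne : (Finset.univ.filter P).Nonempty := by
    refine ⟨Finset.univ.filter (fun x => col x = 0), ?_⟩
    simp only [Finset.mem_filter, Finset.mem_univ, true_and, hP]
    constructor
    · intro x hx; simpa using hx
    · intro b hb
      obtain ⟨u, hu⟩ := hiso b
      have hu0 : col u = 0 := by have := col.valid hu; omega
      exact ⟨u, by simpa using hu0, hu.symm⟩
  obtain ⟨D, hDmem, hDmin⟩ := Finset.exists_min_image _ Finset.card hPne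
  rw [Finset.mem_filter] at hDmem
  obtain ⟨-, hDA, hDdom⟩ := hDmem
  -- private neighbors
  have hpriv : ∀ x : V, ∃ b : V, x ∈ D →
      col b = 1 ∧ G.Adj x b ∧ ∀ y ∈ D, G.Adj y b → y = x := by
    intro x
    by_cases hx : x ∈ D
    · have hlt : (D.erase x).card < D.card := Finset.card_erase_lt_of_mem hx
      have hnP : ¬ P (D.erase x) := by
        intro hPe
        have := hDmin (D.erase x) (by simpa [Finset.mem_filter] using hPe)
        omega
      simp only [hP] at hnP
      push_neg at hnP
      obtain ⟨b, hb1, hb2⟩ := hnP (fun y hy => hDA y (Finset.mem_of_mem_erase hy))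
      obtain ⟨x', hx', hadj⟩ := hDdom b hb1
      have hxx : x' = x := by
        by_contra hne
        exact hb2 x' (Finset.mem_erase.mpr ⟨hne, hx'⟩) hadj
      subst hxx
      refine ⟨b, fun _ => ⟨hb1, hadj, ?_⟩⟩
      intro y hy hyb
      by_contra hne
      exact hb2 y (Finset.mem_erase.mpr ⟨hne, hy⟩) hyb
    · exact ⟨x, fun h => absurd h hx⟩
  choose p hp using hpriv
  -- chosen dominators
  have hdomf : ∀ v : V, ∃ d : V, col v = 1 → d ∈ D ∧ G.Adj d v := by
    intro v
    by_cases hv : col v = 1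
    · obtain ⟨d, hd, hadj⟩ := hDdom v hv
      exact ⟨d, fun _ => ⟨hd, hadj⟩⟩
    · exact ⟨v, fun h => absurd h hv⟩
  choose f hf using hdomf
  -- the coloring
  set M1 : Set (Sym2 V) := {e | ∃ x ∈ D, e = s(x, p x)} with hM1
  set M2 : Set (Sym2 V) :=
    {e | ∃ v : V, col v = 1 ∧ (∀ x ∈ D, v ≠ p x) ∧ e = s(f v, v)} with hM2
  set φ : Sym2 V → ℕ := fun e => if e ∈ M1 then 1 else if e ∈ M2 then 2 else 0 with hφ
  have hφ1 : ∀ e, φ e = 1 ↔ e ∈ M1 := by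
    intro e
    simp only [hφ]
    split_ifs with h1 h2 <;> clear hM1 hM2 <;> simp [h1, *]
  have hφ2 : ∀ e, φ e = 2 ↔ (e ∉ M1 ∧ e ∈ M2) := by
    intro e
    simp only [hφ]
    split_ifs with h1 h2 <;> clear hM1 hM2 <;> simp [h1, *]
  refine ⟨φ, ?_, ?_⟩
  · intro e _
    simp only [hφ]
    split_ifs <;> omega
  -- the key argument, for u on side 0, v on side 1
  have key : ∀ u v : V, G.Adj u v → col u = 0 →
      ∃ c : ℕ, {e | e ∈ edgeNbhd G u v ∧ φ e = c}.ncard = 1 := by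
    intro u v huv hu0
    have hv1 : col v = 1 := hcol huv hu0
    have hmemN : ∀ {e : Sym2 V}, e ∈ edgeNbhd G u v →
        e ∈ G.edgeSet ∧ (u ∈ e ∨ v ∈ e) := by
      intro e he
      rcases he with he | he
      · exact ⟨he.1, Or.inl he.2⟩
      · exact ⟨he.1, Or.inr he.2⟩
    by_cases hpv : ∃ x ∈ D, v = p x
    · -- v is a private neighbor of some x ∈ D
      obtain ⟨x, hxD, hvpx⟩ := hpv
      obtain ⟨hpx1, hpxadj, hpxuniq⟩ := hp x hxD
      refine ⟨1, ?_⟩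
      have : {e | e ∈ edgeNbhd G u v ∧ φ e = 1} = {s(x, v)} := by
        ext e
        simp only [Set.mem_setOf_eq, Set.mem_singleton_iff]
        constructor
        · rintro ⟨heN, he1⟩
          rw [hφ1] at he1
          obtain ⟨y, hyD, rfl⟩ := he1
          obtain ⟨hpy1, hpyadj, hpyuniq⟩ := hp y hyD
          obtain ⟨hes, hem⟩ := hmemN heN
          have hyx : y = x := by
            rcases hem with hm | hm <;> rw [Sym2.mem_iff] at hm
            · rcases hm with rfl | rfl
              · -- u ∈ D, u adjacent to v = p x
                exact hpxuniq u hyD (hvpx ▸ huv)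
              · rw [hpy1] at hu0; omega
            · rcases hm with rfl | rfl
              · rw [hDA v hyD] at hv1; omega
              · exact hpxuniq y hyD (hvpx ▸ hpyadj)
          subst hyx
          rw [hvpx]
        · rintro rfl
          refine ⟨Or.inr ⟨?_, ?_⟩, ?_⟩
          · rw [SimpleGraph.mem_edgeSet]; exact hvpx ▸ hpxadj
          · simp
          · rw [hφ1, hM1]; exact ⟨x, hxD, by rw [hvpx]⟩
      rw [this, Set.ncard_singleton]
    · push_neg at hpv
      by_cases huD : u ∈ D
      · -- u is in D, its private edge is the unique color-1 edge
        obtain ⟨hpu1, hpuadj, hpuuniq⟩ := hp u huD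
        refine ⟨1, ?_⟩
        have : {e | e ∈ edgeNbhd G u v ∧ φ e = 1} = {s(u, p u)} := by
          ext e
          simp only [Set.mem_setOf_eq, Set.mem_singleton_iff]
          constructor
          · rintro ⟨heN, he1⟩
            rw [hφ1] at he1
            obtain ⟨y, hyD, rfl⟩ := he1
            obtain ⟨hpy1, hpyadj, hpyuniq⟩ := hp y hyD
            obtain ⟨hes, hem⟩ := hmemN heN
            have hyu : y = u := by
              rcases hem with hm | hm <;> rw [Sym2.mem_iff] at hm
              · rcases hm with rfl | rfl
                · rfl
                · rw [hpy1] at hu0; omega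
              · rcases hm with rfl | rfl
                · rw [hDA v hyD] at hv1; omega
                · exact absurd rfl (hpv y hyD)
            subst hyu; rfl
          · rintro rfl
            refine ⟨Or.inl ⟨?_, ?_⟩, ?_⟩
            · rw [SimpleGraph.mem_edgeSet]; exact hpuadj
            · simp
            · rw [hφ1, hM1]; exact ⟨u, huD, rfl⟩
        rw [this, Set.ncard_singleton]
      · -- u ∉ D and v not private: the color-2 edge at v is unique
        obtain ⟨hfD, hfadj⟩ := hf v hv1
        have hfvM2 : s(f v, v) ∈ M2 := ⟨v, hv1, fun x hx => hpv x hx, rfl⟩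
        have hfvM1 : s(f v, v) ∉ M1 := by
          rintro ⟨x, hxD, hx⟩
          rw [Sym2.eq_iff] at hx
          rcases hx with ⟨h1, h2⟩ | ⟨h1, h2⟩
          · exact hpv x hxD h2
          · rw [hDA v (h2 ▸ hxD)] at hv1; omega
        refine ⟨2, ?_⟩
        have : {e | e ∈ edgeNbhd G u v ∧ φ e = 2} = {s(f v, v)} := by
          ext e
          simp only [Set.mem_setOf_eq, Set.mem_singleton_iff]
          constructor
          · rintro ⟨heN, he2⟩
            rw [hφ2] at he2
            obtain ⟨-, w, hw1, hwnp, rfl⟩ := he2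
            obtain ⟨hes, hem⟩ := hmemN heN
            have : w = v := by
              rcases hem with hm | hm <;> rw [Sym2.mem_iff] at hm
              · rcases hm with rfl | rfl
                · exact absurd (hf w hw1).1 huD
                · rw [hw1] at hu0; omega
              · rcases hm with rfl | rfl
                · exact absurd hv1 (by rw [hDA (f w) (hf w hw1).1]; omega)
                · rfl
            subst this; rfl
          · rintro rfl
            refine ⟨Or.inr ⟨?_, ?_⟩, ?_⟩
            · rw [SimpleGraph.mem_edgeSet]; exact hfadj
            · simp
            · rw [hφ2]; exact ⟨hfvM1, hfvM2⟩
        rw [this, Set.ncard_singleton]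
  intro u v huv
  by_cases hu0 : col u = 0
  · exact key u v huv hu0
  · have h := key v u huv.symm (hcol' huv hu0).2
    have : edgeNbhd G u v = edgeNbhd G v u := Set.union_comm _ _
    rw [this]
    exact h
end

section
/- Let G be a bipartite graph with bipartition (X, Y) without isolated vertices, let D ⊆ X be a minimal Y-dominating set, and let M be a matching in G[D ∪ P] covering D, where P is the union of private neighbor sets. Define a partial 2-coloring φ by giving every edge of M color 1, and for each y ∈ Y not covered by M, choosing one vertex x ∈ N(y) ∩ D and giving edge xy color 2. Then every edge of G is satisfied by φ. -/
open SimpleGraph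

variable {V : Type*}

lemma matching_edge_eq {G : SimpleGraph V} {M : G.Subgraph} (hM : M.IsMatching) {p q : V}
    (hpq : M.Adj p q) {e : Sym2 V} (he : e ∈ M.edgeSet) (hp : p ∈ e) : e = s(p, q) := by
  induction e with
  | h a b =>
    rw [SimpleGraph.Subgraph.mem_edgeSet] at he
    obtain ⟨w, hw, huniq⟩ := hM hpq.fst_mem
    rw [Sym2.mem_iff] at hp
    rcases hp with rfl | rfl
    · rw [huniq q hpq, huniq b he]
    · rw [Sym2.eq_swap, huniq q hpq, huniq a he.symm]

lemma mem_verts_of_mem_edge {G : SimpleGraph V} {M : G.Subgraph} {p : V} {e : Sym2 V}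
    (he : e ∈ M.edgeSet) (hp : p ∈ e) : p ∈ M.verts := by
  induction e with
  | h a b =>
    rw [SimpleGraph.Subgraph.mem_edgeSet] at he
    rw [Sym2.mem_iff] at hp
    rcases hp with rfl | rfl
    · exact he.fst_mem
    · exact he.snd_mem

theorem stmt_6 [Fintype V] (G : SimpleGraph V) (X Y : Set V)
    (hdisj : Disjoint X Y) (hcover : X ∪ Y = Set.univ)
    (hbip : ∀ ⦃u v⦄, G.Adj u v → (u ∈ X ∧ v ∈ Y) ∨ (u ∈ Y ∧ v ∈ X))
    (hiso : ∀ v : V, ∃ u, G.Adj v u)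
    (D : Set V) (hDX : D ⊆ X) (hdom : NbhdSet G D = Y)
    (hmin : ∀ x ∈ D, NbhdSet G (D \ {x}) ≠ Y)
    (M : G.Subgraph) (hM : M.IsMatching)
    (hMverts : M.verts ⊆ D ∪ (⋃ x ∈ D, privNbrs G D x)) (hMcov : D ⊆ M.verts)
    (g : V → V) (hg : ∀ y ∈ Y \ M.verts, g y ∈ D ∧ G.Adj (g y) y)
    (φ : Sym2 V → Option ℕ)
    (hφ1 : ∀ e : Sym2 V, φ e = some 1 ↔ e ∈ M.edgeSet)
    (hφ2 : ∀ e : Sym2 V, φ e = some 2 ↔ ∃ y ∈ Y \ M.verts, e = s(g y, y))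
    (hφother : ∀ e c, φ e = some c → c = 1 ∨ c = 2) :
    ∀ ⦃u v⦄, G.Adj u v → Satisfied G φ u v := by
  classical
  have hXY : ∀ a, a ∈ X → a ∉ Y := fun a ha => Set.disjoint_left.mp hdisj ha
  have hPY : ∀ z ∈ ⋃ x ∈ D, privNbrs G D x, z ∈ Y := by
    intro z hz
    simp only [Set.mem_iUnion] at hz
    obtain ⟨x, hx, hz⟩ := hz
    have hadj : G.Adj x z := hz.1
    rcases hbip hadj with ⟨_, h⟩ | ⟨h, _⟩
    · exact h
    · exact absurd h (hXY x (hDX hx))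
  have hMX : ∀ z ∈ M.verts, z ∈ X → z ∈ D := by
    intro z hz hzX
    rcases hMverts hz with h | h
    · exact h
    · exact absurd (hPY z h) (hXY z hzX)
  have key : ∀ u v, u ∈ X → v ∈ Y → G.Adj u v → Satisfied G φ u v := by
    intro u v huX hvY huv
    by_cases hvM : v ∈ M.verts
    · -- v matched to w; color 1 appears exactly once
      obtain ⟨w, hw, hwuniq⟩ := hM hvM
      have hvP : v ∈ ⋃ x ∈ D, privNbrs G D x := by
        rcases hMverts hvM with h | h
        · exact absurd hvY (hXY v (hDX h))
        · exact h
      simp only [Set.mem_iUnion] at hvP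
      obtain ⟨x₀, hx₀, hvpriv⟩ := hvP
      have hpriv : G.neighborSet v ∩ D = {x₀} := hvpriv.2
      refine ⟨1, ?_⟩
      have hset : {e | e ∈ edgeNbhd G u v ∧ φ e = some 1} = {s(v, w)} := by
        ext e
        simp only [Set.mem_setOf_eq, Set.mem_singleton_iff]
        constructor
        · rintro ⟨hnb, hc⟩
          rw [hφ1] at hc
          rcases hnb with h | h
          · -- incident to u
            have hue : u ∈ e := h.2
            have huM : u ∈ M.verts := mem_verts_of_mem_edge hc hue
            have huD : u ∈ D := hMX u huM huX
            have hux : u = x₀ := by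
              have : u ∈ G.neighborSet v ∩ D := ⟨huv.symm, huD⟩
              rwa [hpriv, Set.mem_singleton_iff] at this
            have hwD : w ∈ D := by
              have hwX : w ∈ X := by
                rcases hbip (M.adj_sub hw) with ⟨h1, _⟩ | ⟨_, h2⟩
                · exact absurd hvY (hXY v h1)
                · exact h2
              exact hMX w hw.snd_mem hwX
            have hwx : w = x₀ := by
              have : w ∈ G.neighborSet v ∩ D := ⟨M.adj_sub hw, hwD⟩
              rwa [hpriv, Set.mem_singleton_iff] at this
            have huw : u = w := hux.trans hwx.symm
            subst huw
            rw [matching_edge_eq hM hw.symm hc hue, Sym2.eq_swap]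
          · exact matching_edge_eq hM hw hc h.2
        · rintro rfl
          exact ⟨Or.inr ((G.mem_incidenceSet v w).2 (M.adj_sub hw)),
            (hφ1 _).2 (SimpleGraph.Subgraph.mem_edgeSet.2 hw)⟩
      rw [hset]
      exact Set.ncard_singleton _
    · by_cases huM : u ∈ M.verts
      · -- u matched to w; color 1 appears exactly once
        obtain ⟨w, hw, hwuniq⟩ := hM huM
        refine ⟨1, ?_⟩
        have hset : {e | e ∈ edgeNbhd G u v ∧ φ e = some 1} = {s(u, w)} := by
          ext e
          simp only [Set.mem_setOf_eq, Set.mem_singleton_iff]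
          constructor
          · rintro ⟨hnb, hc⟩
            rw [hφ1] at hc
            rcases hnb with h | h
            · exact matching_edge_eq hM hw hc h.2
            · exact absurd (mem_verts_of_mem_edge hc h.2) hvM
          · rintro rfl
            exact ⟨Or.inl ((G.mem_incidenceSet u w).2 (M.adj_sub hw)),
              (hφ1 _).2 (SimpleGraph.Subgraph.mem_edgeSet.2 hw)⟩
        rw [hset]
        exact Set.ncard_singleton _
      · -- neither matched; color 2 appears exactly once
        have hvYM : v ∈ Y \ M.verts := ⟨hvY, hvM⟩
        obtain ⟨hgvD, hgvadj⟩ := hg v hvYM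
        refine ⟨2, ?_⟩
        have hset : {e | e ∈ edgeNbhd G u v ∧ φ e = some 2} = {s(g v, v)} := by
          ext e
          simp only [Set.mem_setOf_eq, Set.mem_singleton_iff]
          constructor
          · rintro ⟨hnb, hc⟩
            rw [hφ2] at hc
            obtain ⟨y, hy, rfl⟩ := hc
            obtain ⟨hgyD, hgyadj⟩ := hg y hy
            rcases hnb with h | h
            · have hue : u ∈ s(g y, y) := h.2
              rw [Sym2.mem_iff] at hue
              rcases hue with h' | h'
              · exact absurd (hMcov hgyD) (h' ▸ huM)
              · exact absurd hy.1 (h' ▸ hXY u huX)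
            · have hve : v ∈ s(g y, y) := h.2
              rw [Sym2.mem_iff] at hve
              rcases hve with h' | h'
              · exact absurd (h' ▸ hvY) (hXY (g y) (hDX hgyD))
              · subst h'
                rfl
          · rintro rfl
            refine ⟨Or.inr ?_, (hφ2 _).2 ⟨v, hvYM, rfl⟩⟩
            rw [Sym2.eq_swap]
            exact (G.mem_incidenceSet v (g v)).2 hgvadj.symm
        rw [hset]
        exact Set.ncard_singleton _
  intro u v huv
  rcases hbip huv with ⟨hu, hv⟩ | ⟨hu, hv⟩
  · exact key u v hu hv huv
  · obtain ⟨c, hc⟩ := key v u hv hu huv.symm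
    exact ⟨c, by rwa [show edgeNbhd G u v = edgeNbhd G v u from Set.union_comm _ _]⟩
end

section
/- If G is a graph without isolated vertices, then χ'_sCF(G) ≤ 2⌈log₂ χ(G)⌉, where χ(G) is the chromatic number of G. -/
open SimpleGraph

variable {V : Type*}

/-! ### Auxiliary development for the proof of `stmt_7`.

Given a proper colouring `c` of `G`, every edge `uv` gets a *level*
`j = log₂ (c u XOR c v)` (the highest bit where the colours of the endpoints differ).
The level-`j` subgraph is bipartite, the two sides being distinguished by bit `j` of the
colour.  For each level we choose a minimal set `T` (on the `true` side) dominating the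
`false` side; by minimality every `b ∈ T` has a private neighbour `pr b`; every non-private
nonisolated `false`-side vertex `a` picks a `T`-neighbour `tau a`.  Private edges
`{pr b, b}` get colour `2j+1`, pick edges `{a, tau a}` get colour `2j`.  Every level-`j`
edge then sees exactly one edge of colour `2j` or exactly one of colour `2j+1`. -/

namespace SCFaux

open Classical

/-- The level of a pair of vertices: highest differing bit of their colours. -/
def lev (c : V → ℕ) (u v : V) : ℕ := Nat.log 2 (c u ^^^ c v)

lemma lev_comm (c : V → ℕ) (u v : V) : lev c u v = lev c v u := by
  unfold lev; rw [Nat.xor_comm]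

/-- Adjacency in the level-`j` subgraph. -/
def HAdj (G : SimpleGraph V) (c : V → ℕ) (j : ℕ) (u v : V) : Prop :=
  G.Adj u v ∧ lev c u v = j

lemma HAdj.symm {G : SimpleGraph V} {c : V → ℕ} {j : ℕ} {u v : V}
    (h : HAdj G c j u v) : HAdj G c j v u :=
  ⟨h.1.symm, (lev_comm c v u) ▸ h.2⟩

/-- Properness of the colouring. -/
def Proper (G : SimpleGraph V) (c : V → ℕ) : Prop := ∀ ⦃u v⦄, G.Adj u v → c u ≠ c v

/-- On a level-`j` edge, bit `j` distinguishes the endpoints. -/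
lemma testBit_ne {G : SimpleGraph V} {c : V → ℕ} (hc : Proper G c) {j : ℕ} {u v : V}
    (h : HAdj G c j u v) : (c u).testBit j ≠ (c v).testBit j := by
  have hne : c u ^^^ c v ≠ 0 := fun h0 => hc h.1 (by have := congrArg (· ^^^ c v) h0; simpa [Nat.xor_assoc] using this)
  have h1 : 2 ^ Nat.log 2 (c u ^^^ c v) ≤ c u ^^^ c v := Nat.pow_log_le_self 2 hne
  have h2 : c u ^^^ c v < 2 ^ (Nat.log 2 (c u ^^^ c v) + 1) :=
    Nat.lt_pow_succ_log_self one_lt_two _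
  have hdiv : (c u ^^^ c v) / 2 ^ Nat.log 2 (c u ^^^ c v) = 1 := by
    refine Nat.div_eq_of_lt_le (by simpa using h1) ?_
    calc c u ^^^ c v < 2 ^ (Nat.log 2 (c u ^^^ c v) + 1) := h2
    _ = (1 + 1) * 2 ^ Nat.log 2 (c u ^^^ c v) := by ring
  have hbit : (c u ^^^ c v).testBit (Nat.log 2 (c u ^^^ c v)) = true := by
    rw [Nat.testBit_eq_decide_div_mod_eq, hdiv]
    decide
  have hj : Nat.log 2 (c u ^^^ c v) = j := h.2
  rw [hj] at hbit
  rw [Nat.testBit_xor] at hbit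
  intro hEq
  rw [hEq] at hbit
  simp at hbit

/-- Two representations of the same edge in level subgraphs have equal levels. -/
lemma hadj_lev_unique {G : SimpleGraph V} {c : V → ℕ} {j j' : ℕ} {u v u' v' : V}
    (hpair : s(u, v) = s(u', v')) (h : HAdj G c j u v) (h' : HAdj G c j' u' v') : j = j' := by
  rw [Sym2.eq_iff] at hpair
  rcases hpair with ⟨rfl, rfl⟩ | ⟨rfl, rfl⟩
  · rw [← h.2, ← h'.2]
  · rw [← h.2, ← h'.2, lev_comm]

/-- `a` is on the `false` side of level `j` and non-isolated there. -/
def Apred (G : SimpleGraph V) (c : V → ℕ) (j : ℕ) (a : V) : Prop :=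
  (c a).testBit j = false ∧ ∃ b, HAdj G c j a b

/-- `T` lies on the `true` side of level `j` and dominates all of `Apred`. -/
def Dom (G : SimpleGraph V) (c : V → ℕ) (j : ℕ) (T : Finset V) : Prop :=
  (∀ b ∈ T, (c b).testBit j = true) ∧
  ∀ a, Apred G c j a → ∃ b ∈ T, HAdj G c j a b

section Construction

variable [Fintype V] (G : SimpleGraph V) (c : V → ℕ)

lemma exists_minimal_dom (hc : Proper G c) (j : ℕ) :
    ∃ T : Finset V, Dom G c j T ∧ ∀ b ∈ T, ¬ Dom G c j (T.erase b) := by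
  classical
  have key : ∀ (n : ℕ) (T : Finset V), T.card ≤ n → Dom G c j T →
      ∃ T' : Finset V, Dom G c j T' ∧ ∀ b ∈ T', ¬ Dom G c j (T'.erase b) := by
    intro n
    induction n with
    | zero =>
        intro T hcard hT
        refine ⟨T, hT, ?_⟩
        intro b hb
        have : T = ∅ := Finset.card_eq_zero.1 (Nat.le_zero.1 hcard)
        simp [this] at hb
    | succ n ih =>
        intro T hcard hT
        by_cases h : ∃ b ∈ T, Dom G c j (T.erase b)
        · obtain ⟨b, hb, hDb⟩ := h
          exact ih (T.erase b) (by
            have := Finset.card_erase_of_mem hb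
            omega) hDb
        · exact ⟨T, hT, fun b hb hD => h ⟨b, hb, hD⟩⟩
  have hfull : Dom G c j (Finset.univ.filter (fun b => (c b).testBit j = true)) := by
    constructor
    · intro b hb
      exact (Finset.mem_filter.1 hb).2
    · intro a ha
      obtain ⟨b, hb⟩ := ha.2
      refine ⟨b, ?_, hb⟩
      rw [Finset.mem_filter]
      refine ⟨Finset.mem_univ _, ?_⟩
      have := testBit_ne hc hb
      rw [ha.1] at this
      exact eq_true_of_ne_false fun hfalse => this hfalse.symm
  exact key _ _ le_rfl hfull

variable (hc : Proper G c)

/-- A minimal dominating set of the level-`j` bipartite subgraph. -/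
noncomputable def Tmin (j : ℕ) : Finset V := (exists_minimal_dom G c hc j).choose

lemma Tmin_dom (j : ℕ) : Dom G c j (Tmin G c hc j) :=
  (exists_minimal_dom G c hc j).choose_spec.1

lemma Tmin_min (j : ℕ) : ∀ b ∈ Tmin G c hc j, ¬ Dom G c j ((Tmin G c hc j).erase b) :=
  (exists_minimal_dom G c hc j).choose_spec.2

lemma Tmin_side {j : ℕ} {b : V} (hb : b ∈ Tmin G c hc j) : (c b).testBit j = true :=
  (Tmin_dom G c hc j).1 b hb

/-- Every member of a minimal dominating set has a private neighbour. -/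
lemma exists_priv {j : ℕ} {b : V} (hb : b ∈ Tmin G c hc j) :
    ∃ a, Apred G c j a ∧ HAdj G c j a b ∧
      ∀ b' ∈ Tmin G c hc j, HAdj G c j a b' → b' = b := by
  have hnd := Tmin_min G c hc j b hb
  unfold Dom at hnd
  push_neg at hnd
  have hside : ∀ b' ∈ (Tmin G c hc j).erase b, (c b').testBit j = true := fun b' hb' =>
    Tmin_side G c hc (Finset.mem_of_mem_erase hb')
  obtain ⟨a, haA, hnoerase⟩ := hnd hside
  obtain ⟨b₀, hb₀T, hb₀adj⟩ := (Tmin_dom G c hc j).2 a haA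
  have hb₀ : b₀ = b := by
    by_contra hne
    exact hnoerase b₀ (Finset.mem_erase.2 ⟨hne, hb₀T⟩) hb₀adj
  subst hb₀
  refine ⟨a, haA, hb₀adj, ?_⟩
  intro b' hb'T hadj'
  by_contra hne
  exact hnoerase b' (Finset.mem_erase.2 ⟨hne, hb'T⟩) hadj'

/-- The private neighbour of `b ∈ Tmin j`. -/
noncomputable def pr (j : ℕ) (b : V) : V :=
  if h : ∃ a, Apred G c j a ∧ HAdj G c j a b ∧
      ∀ b' ∈ Tmin G c hc j, HAdj G c j a b' → b' = b then h.choose else b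

lemma pr_spec {j : ℕ} {b : V} (hb : b ∈ Tmin G c hc j) :
    Apred G c j (pr G c hc j b) ∧ HAdj G c j (pr G c hc j b) b ∧
      ∀ b' ∈ Tmin G c hc j, HAdj G c j (pr G c hc j b) b' → b' = b := by
  have h := exists_priv G c hc hb
  rw [pr, dif_pos h]
  exact h.choose_spec

/-- The chosen `T`-neighbour of a `false`-side vertex. -/
noncomputable def tau (j : ℕ) (a : V) : V :=
  if h : ∃ b ∈ Tmin G c hc j, HAdj G c j a b then h.choose else a

lemma tau_spec {j : ℕ} {a : V} (ha : Apred G c j a) :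
    tau G c hc j a ∈ Tmin G c hc j ∧ HAdj G c j a (tau G c hc j a) := by
  have h : ∃ b ∈ Tmin G c hc j, HAdj G c j a b := (Tmin_dom G c hc j).2 a ha
  rw [tau, dif_pos h]
  exact ⟨h.choose_spec.1, h.choose_spec.2⟩

/-- Membership in the colour-`2j+1` class. -/
def F2mem (j : ℕ) (e : Sym2 V) : Prop :=
  ∃ b ∈ Tmin G c hc j, e = s(pr G c hc j b, b)

/-- Membership in the colour-`2j` class. -/
def F1mem (j : ℕ) (e : Sym2 V) : Prop :=
  ∃ a, Apred G c j a ∧ (∀ b ∈ Tmin G c hc j, pr G c hc j b ≠ a) ∧ e = s(a, tau G c hc j a)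

lemma F2mem_hadj {j : ℕ} {e : Sym2 V} (h : F2mem G c hc j e) :
    ∃ x y, HAdj G c j x y ∧ e = s(x, y) := by
  obtain ⟨b, hb, rfl⟩ := h
  exact ⟨_, _, (pr_spec G c hc hb).2.1, rfl⟩

lemma F1mem_hadj {j : ℕ} {e : Sym2 V} (h : F1mem G c hc j e) :
    ∃ x y, HAdj G c j x y ∧ e = s(x, y) := by
  obtain ⟨a, ha, _, rfl⟩ := h
  exact ⟨_, _, (tau_spec G c hc ha).2, rfl⟩

lemma F2mem_unique {j j' : ℕ} {e : Sym2 V} (h : F2mem G c hc j e)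
    (h' : F2mem G c hc j' e) : j = j' := by
  obtain ⟨x, y, hxy, rfl⟩ := F2mem_hadj G c hc h
  obtain ⟨x', y', hxy', he⟩ := F2mem_hadj G c hc h'
  exact hadj_lev_unique he hxy hxy'

lemma F2F1_unique {j j' : ℕ} {e : Sym2 V} (h : F2mem G c hc j e)
    (h' : F1mem G c hc j' e) : j = j' := by
  obtain ⟨x, y, hxy, rfl⟩ := F2mem_hadj G c hc h
  obtain ⟨x', y', hxy', he⟩ := F1mem_hadj G c hc h'
  exact hadj_lev_unique he hxy hxy'

lemma F1mem_unique {j j' : ℕ} {e : Sym2 V} (h : F1mem G c hc j e)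
    (h' : F1mem G c hc j' e) : j = j' := by
  obtain ⟨x, y, hxy, rfl⟩ := F1mem_hadj G c hc h
  obtain ⟨x', y', hxy', he⟩ := F1mem_hadj G c hc h'
  exact hadj_lev_unique he hxy hxy'

/-- The partial edge colouring. -/
noncomputable def phi (e : Sym2 V) : Option ℕ :=
  if h : ∃ j, F2mem G c hc j e then some (2 * h.choose + 1)
  else if h : ∃ j, F1mem G c hc j e then some (2 * h.choose) else none

lemma phi_eq_odd {j : ℕ} {e : Sym2 V} :
    phi G c hc e = some (2 * j + 1) ↔ F2mem G c hc j e := by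
  unfold phi
  split_ifs with h2 h1
  · constructor
    · intro hEq
      have : h2.choose = j := by
        have := Option.some.inj hEq
        omega
      exact this ▸ h2.choose_spec
    · intro hF
      have : h2.choose = j := F2mem_unique G c hc h2.choose_spec hF
      rw [this]
  · constructor
    · intro hEq
      have := Option.some.inj hEq
      omega
    · intro hF
      exact absurd ⟨j, hF⟩ h2
  · constructor
    · intro h; exact absurd h (by simp)
    · intro hF
      exact absurd ⟨j, hF⟩ h2

lemma phi_eq_even {j : ℕ} {e : Sym2 V} :
    phi G c hc e = some (2 * j) ↔ (¬ ∃ j', F2mem G c hc j' e) ∧ F1mem G c hc j e := by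
  unfold phi
  split_ifs with h2 h1
  · constructor
    · intro hEq
      have := Option.some.inj hEq
      omega
    · intro hF
      exact absurd h2 hF.1
  · constructor
    · intro hEq
      have : h1.choose = j := by
        have := Option.some.inj hEq
        omega
      exact ⟨h2, this ▸ h1.choose_spec⟩
    · intro hF
      have : h1.choose = j := F1mem_unique G c hc h1.choose_spec hF.2
      rw [this]
  · constructor
    · intro h; exact absurd h (by simp)
    · intro hF
      exact absurd ⟨j, hF.2⟩ h1

lemma mem_edgeNbhd_iff {G : SimpleGraph V} {u v : V} {e : Sym2 V} :
    e ∈ edgeNbhd G u v ↔ e ∈ G.edgeSet ∧ (u ∈ e ∨ v ∈ e) := by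
  unfold edgeNbhd SimpleGraph.incidenceSet
  constructor
  · rintro (⟨h1, h2⟩ | ⟨h1, h2⟩)
    · exact ⟨h1, Or.inl h2⟩
    · exact ⟨h1, Or.inr h2⟩
  · rintro ⟨h1, h2 | h2⟩
    · exact Or.inl ⟨h1, h2⟩
    · exact Or.inr ⟨h1, h2⟩

/-- Main satisfaction lemma, assuming `u` is on the `false` side of the level of `uv`. -/
lemma satisfied_of_sideA {u v : V} (hadj : G.Adj u v)
    (hu : (c u).testBit (lev c u v) = false) :
    Satisfied G (phi G c hc) u v := by
  set j := lev c u v with hj_def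
  have hj : HAdj G c j u v := ⟨hadj, rfl⟩
  have hv : (c v).testBit j = true := by
    have := testBit_ne hc hj
    rw [hu] at this
    exact eq_true_of_ne_false fun hfalse => this hfalse.symm
  have hAu : Apred G c j u := ⟨hu, v, hj⟩
  by_cases hvT : v ∈ Tmin G c hc j
  · -- the private edge of `v` is the unique edge with colour `2j+1` in the neighbourhood
    refine ⟨2 * j + 1, ?_⟩
    have hS : {e | e ∈ edgeNbhd G u v ∧ phi G c hc e = some (2 * j + 1)}
        = {s(pr G c hc j v, v)} := by
      ext e
      simp only [Set.mem_setOf_eq, Set.mem_singleton_iff]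
      constructor
      · rintro ⟨henb, hphi⟩
        obtain ⟨b, hbT, rfl⟩ := (phi_eq_odd G c hc).1 hphi
        rcases (mem_edgeNbhd_iff.1 henb).2 with hin | hin
        · rcases Sym2.mem_iff.1 hin with hEq | hEq
          · -- u = pr b; then v is a Tmin-neighbour of pr b, hence v = b
            have hb := pr_spec G c hc hbT
            have : v = b := hb.2.2 v hvT (by rw [← hEq]; exact hj)
            rw [this]
          · -- u = b : contradiction with sides
            exfalso
            have := Tmin_side G c hc hbT
            rw [← hEq, hu] at this
            exact Bool.false_ne_true this
        · rcases Sym2.mem_iff.1 hin with hEq | hEq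
          · -- v = pr b : contradiction with sides
            exfalso
            have := (pr_spec G c hc hbT).1.1
            rw [← hEq, hv] at this
            exact Bool.noConfusion this
          · rw [← hEq]
      · rintro rfl
        have hb := pr_spec G c hc hvT
        refine ⟨mem_edgeNbhd_iff.2 ⟨hb.2.1.1, Or.inr (Sym2.mem_mk_right _ _)⟩, ?_⟩
        exact (phi_eq_odd G c hc).2 ⟨v, hvT, rfl⟩
    rw [hS]
    exact Set.ncard_singleton _
  · by_cases hup : ∃ b ∈ Tmin G c hc j, pr G c hc j b = u
    · -- u is a private neighbour: its private edge is the unique odd-coloured edge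
      obtain ⟨b₀, hb₀T, hpr₀⟩ := hup
      refine ⟨2 * j + 1, ?_⟩
      have hS : {e | e ∈ edgeNbhd G u v ∧ phi G c hc e = some (2 * j + 1)}
          = {s(u, b₀)} := by
        ext e
        simp only [Set.mem_setOf_eq, Set.mem_singleton_iff]
        constructor
        · rintro ⟨henb, hphi⟩
          obtain ⟨b, hbT, rfl⟩ := (phi_eq_odd G c hc).1 hphi
          rcases (mem_edgeNbhd_iff.1 henb).2 with hin | hin
          · rcases Sym2.mem_iff.1 hin with hEq | hEq
            · -- u = pr b, and u = pr b₀; b = b₀ by privateness of u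
              have hb₀ := pr_spec G c hc hb₀T
              have hb := pr_spec G c hc hbT
              have hadj' : HAdj G c j (pr G c hc j b₀) b := by
                rw [hpr₀, hEq]; exact hb.2.1
              have : b = b₀ := hb₀.2.2 b hbT hadj'
              rw [this, hpr₀]
            · exfalso
              have := Tmin_side G c hc hbT
              rw [← hEq, hu] at this
              exact Bool.false_ne_true this
          · rcases Sym2.mem_iff.1 hin with hEq | hEq
            · exfalso
              have := (pr_spec G c hc hbT).1.1
              rw [← hEq, hv] at this
              exact Bool.noConfusion this
            · exfalso
              exact hvT (hEq ▸ hbT)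
        · rintro rfl
          have hb₀ := pr_spec G c hc hb₀T
          refine ⟨mem_edgeNbhd_iff.2 ⟨?_, Or.inl (Sym2.mem_mk_left _ _)⟩, ?_⟩
          · rw [← hpr₀]; exact hb₀.2.1.1
          · refine (phi_eq_odd G c hc).2 ⟨b₀, hb₀T, ?_⟩
            rw [hpr₀]
      rw [hS]
      exact Set.ncard_singleton _
    · -- the pick edge of `u` is the unique even-coloured edge
      push_neg at hup
      obtain ⟨htT, htadj⟩ := tau_spec G c hc hAu
      have hnF2 : ¬ ∃ j', F2mem G c hc j' (s(u, tau G c hc j u)) := by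
        rintro ⟨j', hF2⟩
        obtain ⟨b, hbT', he⟩ := hF2
        have hj' : j' = j := by
          obtain ⟨x, y, hxy, he2⟩ := F2mem_hadj G c hc (⟨b, hbT', he⟩ :
            F2mem G c hc j' (s(u, tau G c hc j u)))
          exact hadj_lev_unique he2.symm hxy htadj
        subst hj'
        rw [Sym2.eq_iff] at he
        rcases he with ⟨hEq1, hEq2⟩ | ⟨hEq1, hEq2⟩
        · exact hup b hbT' hEq1.symm
        · -- u = b : side contradiction
          have := Tmin_side G c hc hbT'
          rw [← hEq1, hu] at this
          exact Bool.noConfusion this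
      refine ⟨2 * j, ?_⟩
      have hS : {e | e ∈ edgeNbhd G u v ∧ phi G c hc e = some (2 * j)}
          = {s(u, tau G c hc j u)} := by
        ext e
        simp only [Set.mem_setOf_eq, Set.mem_singleton_iff]
        constructor
        · rintro ⟨henb, hphi⟩
          obtain ⟨-, a, haA, hanp, rfl⟩ := (phi_eq_even G c hc).1 hphi
          have htTa := (tau_spec G c hc haA).1
          rcases (mem_edgeNbhd_iff.1 henb).2 with hin | hin
          · rcases Sym2.mem_iff.1 hin with hEq | hEq
            · rw [hEq]
            · -- u = tau a ∈ Tmin : side contradiction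
              exfalso
              have := Tmin_side G c hc htTa
              rw [← hEq, hu] at this
              exact Bool.noConfusion this
          · rcases Sym2.mem_iff.1 hin with hEq | hEq
            · -- v = a : side contradiction
              exfalso
              have := haA.1
              rw [← hEq, hv] at this
              exact Bool.noConfusion this
            · -- v = tau a ∈ Tmin : contradicts hvT
              exfalso
              exact hvT (hEq ▸ htTa)
        · rintro rfl
          refine ⟨mem_edgeNbhd_iff.2 ⟨htadj.1, Or.inl (Sym2.mem_mk_left _ _)⟩, ?_⟩
          exact (phi_eq_even G c hc).2 ⟨hnF2, ⟨u, hAu, fun b hb => hup b hb, rfl⟩⟩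
      rw [hS]
      exact Set.ncard_singleton _

/-- Every edge is satisfied by `phi`. -/
lemma satisfied_all {u v : V} (hadj : G.Adj u v) : Satisfied G (phi G c hc) u v := by
  have hne := testBit_ne hc (⟨hadj, rfl⟩ : HAdj G c (lev c u v) u v)
  by_cases hu : (c u).testBit (lev c u v) = false
  · exact satisfied_of_sideA G c hc hadj hu
  · have hv : (c v).testBit (lev c v u) = false := by
      rw [lev_comm]
      cases hcv : (c v).testBit (lev c u v)
      · rfl
      · exfalso
        apply hne
        rw [hcv]
        exact eq_true_of_ne_false hu
    have := satisfied_of_sideA G c hc hadj.symm hv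
    obtain ⟨γ, hγ⟩ := this
    refine ⟨γ, ?_⟩
    have : edgeNbhd G u v = edgeNbhd G v u := by
      unfold edgeNbhd; exact Set.union_comm _ _
    rw [this]
    exact hγ

/-- `phi` colours only edges of `G`, with colours `< 2 * t` whenever all colour values
are `< 2 ^ t`. -/
lemma phi_bound {t : ℕ} (hb : ∀ w, c w < 2 ^ t) {e : Sym2 V} {γ : ℕ}
    (h : phi G c hc e = some γ) : e ∈ G.edgeSet ∧ γ < 2 * t := by
  have key : ∀ j x y, HAdj G c j x y → e = s(x, y) → e ∈ G.edgeSet ∧ j < t := by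
    intro j x y hxy he
    refine ⟨he ▸ (SimpleGraph.mem_edgeSet G).2 hxy.1, ?_⟩
    have hne : c x ^^^ c y ≠ 0 := fun h0 => hc hxy.1 (by have := congrArg (· ^^^ c y) h0; simpa [Nat.xor_assoc] using this)
    have hlt : c x ^^^ c y < 2 ^ t := Nat.xor_lt_two_pow (hb x) (hb y)
    have hlog : lev c x y < t := Nat.log_lt_of_lt_pow hne hlt
    exact hxy.2 ▸ hlog
  unfold phi at h
  split_ifs at h with h2 h1
  · obtain ⟨x, y, hxy, he⟩ := F2mem_hadj G c hc h2.choose_spec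
    obtain ⟨hE, hj⟩ := key _ _ _ hxy he
    have := Option.some.inj h
    refine ⟨hE, by omega⟩
  · obtain ⟨x, y, hxy, he⟩ := F1mem_hadj G c hc h1.choose_spec
    obtain ⟨hE, hj⟩ := key _ _ _ hxy he
    have := Option.some.inj h
    refine ⟨hE, by omega⟩

end Construction

end SCFaux

theorem stmt_7 [Fintype V] (G : SimpleGraph V)
    (hiso : ∀ v : V, ∃ u, G.Adj v u) (hedge : G.edgeSet.Nonempty) :
    sCFIndex G ≤ 2 * Nat.clog 2 G.chromaticNumber.toNat := by
  classical
  set n := G.chromaticNumber.toNat with hn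
  have hcol : G.Colorable n := G.colorable_chromaticNumber_of_fintype
  obtain ⟨C, hC⟩ := (G.colorable_iff_exists_bdd_nat_coloring n).1 hcol
  set c : V → ℕ := fun v => C v with hcdef
  have hc : SCFaux.Proper G c := fun u v h => C.valid h
  set t := Nat.clog 2 n with ht
  have hb : ∀ w, c w < 2 ^ t := fun w =>
    lt_of_lt_of_le (hC w) (Nat.le_pow_clog one_lt_two n)
  apply Nat.sInf_le
  refine ⟨SCFaux.phi G c hc, ?_, ?_⟩
  · intro e γ hγ
    exact SCFaux.phi_bound G c hc hb hγ
  · intro u v hadj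
    exact SCFaux.satisfied_all G c hc hadj
end

section
/- If G is a graph without isolated vertices, then χ'_CF(G) ≤ 2⌈log₂ χ(G)⌉ + 1. -/
open SimpleGraph

variable {V : Type*}

lemma testBit_log2_self {x : ℕ} (hx : x ≠ 0) : x.testBit x.log2 = true := by
  have h1 : 2 ^ x.log2 ≤ x := Nat.log2_self_le hx
  have h2 : x < 2 ^ (x.log2 + 1) := Nat.lt_log2_self
  have hpos : 0 < 2 ^ x.log2 := by positivity
  have hdiv : x / 2 ^ x.log2 = 1 := by
    have hlt : x / 2 ^ x.log2 < 2 := by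
      rw [Nat.div_lt_iff_lt_mul hpos]
      calc x < 2 ^ (x.log2 + 1) := h2
        _ = 2 * 2 ^ x.log2 := by ring
    have hge : 1 ≤ x / 2 ^ x.log2 := (Nat.one_le_div_iff hpos).mpr h1
    omega
  rw [Nat.testBit_eq_decide_div_mod_eq, hdiv]
  simp

lemma bip_lemma {V : Type*} [Fintype V] (R : V → V → Prop)
    (s : V → Bool) (hcross : ∀ u v, R u v → s u ≠ s v) :
    ∃ F0 F1 : Set (Sym2 V),
      (∀ e ∈ F0 ∪ F1, ∃ u v, R u v ∧ e = s(u, v)) ∧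
      (∀ e ∈ F0, e ∉ F1) ∧
      (∀ u v, R u v → s u = false →
        ({e | e ∈ F0 ∧ (u ∈ e ∨ v ∈ e)}.ncard = 1 ∨
         {e | e ∈ F1 ∧ (u ∈ e ∨ v ∈ e)}.ncard = 1)) := by
  classical
  set Dset : Set (Finset V) :=
    {D | (∀ x ∈ D, s x = true) ∧ ∀ a, s a = false → (∃ y, R a y) → ∃ x ∈ D, R a x}
    with hDsetdef
  have hBmem : (Finset.univ.filter (fun x => s x = true)) ∈ Dset := by
    constructor
    · intro x hx; simpa using (Finset.mem_filter.mp hx).2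
    · rintro a ha ⟨y, hy⟩
      refine ⟨y, ?_, hy⟩
      have hne := hcross a y hy
      rw [ha] at hne
      have : s y = true := by
        cases h : s y
        · exact absurd h.symm hne
        · rfl
      simp [this]
  have hSne : {n | ∃ D ∈ Dset, D.card = n}.Nonempty := ⟨_, _, hBmem, rfl⟩
  obtain ⟨D, hD, hDcard⟩ := Nat.sInf_mem hSne
  have hmin : ∀ D' ∈ Dset, D.card ≤ D'.card := by
    intro D' hD'
    rw [hDcard]
    exact Nat.sInf_le ⟨D', hD', rfl⟩
  -- private neighbors
  have hpriv : ∀ x ∈ D, ∃ a, s a = false ∧ R a x ∧ ∀ x' ∈ D, R a x' → x' = x := by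
    intro x hx
    by_contra hcon
    push_neg at hcon
    have herase : D.erase x ∈ Dset := by
      constructor
      · intro y hy; exact hD.1 y (Finset.mem_of_mem_erase hy)
      · intro a ha hay
        obtain ⟨x1, hx1D, hx1⟩ := hD.2 a ha hay
        by_cases hxx : x1 = x
        · obtain ⟨x', hx'D, hx'R, hx'ne⟩ := hcon a ha (hxx ▸ hx1)
          exact ⟨x', Finset.mem_erase.mpr ⟨hx'ne, hx'D⟩, hx'R⟩
        · exact ⟨x1, Finset.mem_erase.mpr ⟨hxx, hx1D⟩, hx1⟩
    have h1 := hmin _ herase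
    have h2 : (D.erase x).card < D.card := Finset.card_erase_lt_of_mem hx
    omega
  have hpex : ∀ x : V, ∃ a, x ∈ D → (s a = false ∧ R a x ∧ ∀ x' ∈ D, R a x' → x' = x) := by
    intro x
    by_cases hx : x ∈ D
    · obtain ⟨a, h⟩ := hpriv x hx; exact ⟨a, fun _ => h⟩
    · exact ⟨x, fun h => absurd h hx⟩
  choose p hp using hpex
  set A' : Set V := {a | s a = false ∧ (∃ y, R a y) ∧ ¬∃ x ∈ D, p x = a} with hA'def
  have hqex : ∀ a : V, ∃ x, a ∈ A' → (x ∈ D ∧ R a x) := by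
    intro a
    by_cases ha : a ∈ A'
    · obtain ⟨x, hxD, hxR⟩ := hD.2 a ha.1 ha.2.1; exact ⟨x, fun _ => ⟨hxD, hxR⟩⟩
    · exact ⟨a, fun h => absurd h ha⟩
  choose q hq using hqex
  refine ⟨(fun x => s(p x, x)) '' (D : Set V), (fun a => s(a, q a)) '' A', ?_, ?_, ?_⟩
  · rintro e (⟨x, hx, rfl⟩ | ⟨a, ha, rfl⟩)
    · have hx' : x ∈ D := by simpa using hx
      exact ⟨p x, x, (hp x hx').2.1, rfl⟩
    · exact ⟨a, q a, (hq a ha).2, rfl⟩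
  · rintro e ⟨x, hx, rfl⟩ ⟨a, ha, he⟩
    have hx' : x ∈ D := by simpa using hx
    rcases Sym2.eq_iff.mp he with ⟨h1, h2⟩ | ⟨h1, h2⟩
    · exact ha.2.2 ⟨x, hx', h1.symm⟩
    · have hsa : s a = false := ha.1
      have hsx : s x = true := hD.1 x hx'
      rw [← h1] at hsx
      rw [hsa] at hsx
      exact absurd hsx (by simp)
  · intro u v huv hsu
    have hsv : s v = true := by
      have hne := hcross u v huv
      rw [hsu] at hne
      cases h : s v
      · exact absurd h.symm hne
      · rfl
    by_cases hvD : v ∈ D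
    · left
      have hset : {e | e ∈ (fun x => s(p x, x)) '' (D : Set V) ∧ (u ∈ e ∨ v ∈ e)}
          = {s(p v, v)} := by
        ext e
        simp only [Set.mem_setOf_eq, Set.mem_singleton_iff, Set.mem_image, Finset.mem_coe]
        constructor
        · rintro ⟨⟨x, hx, rfl⟩, hm⟩
          have hpx := hp x hx
          rcases hm with hm | hm <;> rcases Sym2.mem_iff.mp hm with h | h
          · -- u = p x
            have hx0 : v = x := hpx.2.2 v hvD (by rw [← h]; exact huv)
            rw [hx0]
          · -- u = x
            have := hD.1 x hx
            rw [← h, hsu] at this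
            exact absurd this (by simp)
          · -- v = p x
            have := hpx.1
            rw [← h, hsv] at this
            exact absurd this (by simp)
          · -- v = x
            rw [h]
        · rintro rfl
          exact ⟨⟨v, hvD, rfl⟩, Or.inr (Sym2.mem_iff.mpr (Or.inr rfl))⟩
      rw [hset, Set.ncard_singleton]
    · by_cases hhappy : ∃ x ∈ D, p x = u
      · left
        obtain ⟨x0, hx0D, hx0⟩ := hhappy
        have hset : {e | e ∈ (fun x => s(p x, x)) '' (D : Set V) ∧ (u ∈ e ∨ v ∈ e)}
            = {s(p x0, x0)} := by
          ext e
          simp only [Set.mem_setOf_eq, Set.mem_singleton_iff, Set.mem_image, Finset.mem_coe]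
          constructor
          · rintro ⟨⟨x, hx, rfl⟩, hm⟩
            have hpx := hp x hx
            rcases hm with hm | hm <;> rcases Sym2.mem_iff.mp hm with h | h
            · -- u = p x
              have hRux : R (p x0) x := by
                rw [hx0, h]; exact hpx.2.1
              have hxx0 : x = x0 := (hp x0 hx0D).2.2 x hx hRux
              rw [hxx0]
            · -- u = x
              have := hD.1 x hx
              rw [← h, hsu] at this
              exact absurd this (by simp)
            · -- v = p x
              have := hpx.1
              rw [← h, hsv] at this
              exact absurd this (by simp)
            · -- v = x
              rw [← h] at hx
              exact absurd hx hvD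
          · rintro rfl
            exact ⟨⟨x0, hx0D, rfl⟩, Or.inl (by rw [hx0]; exact Sym2.mem_iff.mpr (Or.inl rfl))⟩
        rw [hset, Set.ncard_singleton]
      · right
        have huA' : u ∈ A' := ⟨hsu, ⟨v, huv⟩, hhappy⟩
        have hset : {e | e ∈ (fun a => s(a, q a)) '' A' ∧ (u ∈ e ∨ v ∈ e)}
            = {s(u, q u)} := by
          ext e
          simp only [Set.mem_setOf_eq, Set.mem_singleton_iff, Set.mem_image]
          constructor
          · rintro ⟨⟨a, ha, rfl⟩, hm⟩
            have hqa := hq a ha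
            rcases hm with hm | hm <;> rcases Sym2.mem_iff.mp hm with h | h
            · -- u = a
              rw [h]
            · -- u = q a
              have := hD.1 _ hqa.1
              rw [← h, hsu] at this
              exact absurd this (by simp)
            · -- v = a
              have : s a = false := ha.1
              rw [← h, hsv] at this
              exact absurd this (by simp)
            · -- v = q a
              rw [← h] at hqa
              exact absurd hqa.1 hvD
          · rintro rfl
            exact ⟨⟨u, huA', rfl⟩, Or.inl (Sym2.mem_iff.mpr (Or.inl rfl))⟩
        rw [hset, Set.ncard_singleton]

theorem stmt_8 [Fintype V] (G : SimpleGraph V)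
    (hiso : ∀ v : V, ∃ u, G.Adj v u) (hchi : 2 ≤ G.chromaticNumber) :
    cfIndex G ≤ 2 * Nat.clog 2 G.chromaticNumber.toNat + 1 := by
  classical
  obtain ⟨C⟩ := G.colorable_chromaticNumber_of_fintype
  set n := G.chromaticNumber.toNat with hn
  set t := Nat.clog 2 n with ht
  have hnt : n ≤ 2 ^ t := Nat.le_pow_clog (by norm_num) n
  set c : V → ℕ := fun v => (C v : ℕ) with hc
  have hclt : ∀ v, c v < 2 ^ t := fun v => lt_of_lt_of_le (C v).2 hnt
  have hxne : ∀ {u v}, G.Adj u v → c u ^^^ c v ≠ 0 := by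
    intro u v h hx
    exact C.valid h (Fin.ext (xor_eq_zero_iff.mp hx))
  have hlt : ∀ {u v}, G.Adj u v → (c u ^^^ c v).log2 < t := by
    intro u v h
    rw [Nat.log2_lt (hxne h)]
    exact Nat.xor_lt_two_pow (hclt u) (hclt v)
  have htb : ∀ {u v}, G.Adj u v →
      (c u).testBit ((c u ^^^ c v).log2) ≠ (c v).testBit ((c u ^^^ c v).log2) := by
    intro u v h heq
    have h1 := testBit_log2_self (hxne h)
    rw [Nat.testBit_xor, heq, Bool.xor_self] at h1
    exact Bool.false_ne_true h1
  have key : ∀ i : ℕ, ∃ F0 F1 : Set (Sym2 V),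
      (∀ e ∈ F0 ∪ F1, ∃ u v, (G.Adj u v ∧ (c u ^^^ c v).log2 = i) ∧ e = s(u, v)) ∧
      (∀ e ∈ F0, e ∉ F1) ∧
      (∀ u v, (G.Adj u v ∧ (c u ^^^ c v).log2 = i) → (c u).testBit i = false →
        ({e | e ∈ F0 ∧ (u ∈ e ∨ v ∈ e)}.ncard = 1 ∨
         {e | e ∈ F1 ∧ (u ∈ e ∨ v ∈ e)}.ncard = 1)) := by
    intro i
    exact bip_lemma (fun u v => G.Adj u v ∧ (c u ^^^ c v).log2 = i)
      (fun v => (c v).testBit i)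
      (fun u v h => h.2 ▸ htb h.1)
  choose F0 F1 hmem hdisj hcnt using key
  set lvl : Sym2 V → ℕ :=
    Sym2.lift ⟨fun u v => (c u ^^^ c v).log2, fun u v => by dsimp only; rw [Nat.xor_comm]⟩ with hlvldef
  have hlvl : ∀ u v, lvl s(u, v) = (c u ^^^ c v).log2 := fun u v => rfl
  set φ : Sym2 V → ℕ := fun e =>
    if e ∈ F0 (lvl e) then 2 * lvl e else if e ∈ F1 (lvl e) then 2 * lvl e + 1 else 2 * t
    with hφdef
  have hF0 : ∀ i, ∀ e ∈ F0 i, lvl e = i ∧ e ∈ G.edgeSet ∧ i < t := by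
    intro i e he
    obtain ⟨u, v, ⟨hadj, hlog⟩, rfl⟩ := hmem i e (Or.inl he)
    exact ⟨by rw [hlvl, hlog], G.mem_edgeSet.mpr hadj, hlog ▸ hlt hadj⟩
  have hF1 : ∀ i, ∀ e ∈ F1 i, lvl e = i ∧ e ∈ G.edgeSet ∧ i < t := by
    intro i e he
    obtain ⟨u, v, ⟨hadj, hlog⟩, rfl⟩ := hmem i e (Or.inr he)
    exact ⟨by rw [hlvl, hlog], G.mem_edgeSet.mpr hadj, hlog ▸ hlt hadj⟩
  have hnbhd : ∀ u v e, e ∈ edgeNbhd G u v ↔ e ∈ G.edgeSet ∧ (u ∈ e ∨ v ∈ e) := by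
    intro u v e
    simp only [edgeNbhd, Set.mem_union, SimpleGraph.incidenceSet, Set.mem_setOf_eq]
    tauto
  have oriented : ∀ u v, G.Adj u v → (c u).testBit ((c u ^^^ c v).log2) = false →
      ∃ col : ℕ, {e | e ∈ edgeNbhd G u v ∧ φ e = col}.ncard = 1 := by
    intro u v hadj hbit
    have hit : (c u ^^^ c v).log2 < t := hlt hadj
    set i := (c u ^^^ c v).log2 with hi
    rcases hcnt i u v ⟨hadj, rfl⟩ hbit with h | h
    · refine ⟨2 * i, ?_⟩
      have hseteq : {e | e ∈ edgeNbhd G u v ∧ φ e = 2 * i}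
          = {e | e ∈ F0 i ∧ (u ∈ e ∨ v ∈ e)} := by
        ext e
        simp only [Set.mem_setOf_eq, hnbhd]
        constructor
        · rintro ⟨⟨hedge, hm⟩, hφ⟩
          refine ⟨?_, hm⟩
          rw [hφdef] at hφ
          simp only at hφ
          split_ifs at hφ with h0 h1
          · have hle : lvl e = i := by omega
            rwa [hle] at h0
          · omega
          · omega
        · rintro ⟨h0, hm⟩
          obtain ⟨hlv, hedge, _⟩ := hF0 i e h0
          refine ⟨⟨hedge, hm⟩, ?_⟩
          rw [hφdef]
          simp only
          rw [hlv, if_pos h0]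
      rw [hseteq]
      exact h
    · refine ⟨2 * i + 1, ?_⟩
      have hseteq : {e | e ∈ edgeNbhd G u v ∧ φ e = 2 * i + 1}
          = {e | e ∈ F1 i ∧ (u ∈ e ∨ v ∈ e)} := by
        ext e
        simp only [Set.mem_setOf_eq, hnbhd]
        constructor
        · rintro ⟨⟨hedge, hm⟩, hφ⟩
          refine ⟨?_, hm⟩
          rw [hφdef] at hφ
          simp only at hφ
          split_ifs at hφ with h0 h1
          · omega
          · have hle : lvl e = i := by omega
            rwa [hle] at h1
          · omega
        · rintro ⟨h1, hm⟩
          obtain ⟨hlv, hedge, _⟩ := hF1 i e h1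
          refine ⟨⟨hedge, hm⟩, ?_⟩
          rw [hφdef]
          simp only
          rw [hlv, if_neg (fun h0 => hdisj i e h0 h1), if_pos h1]
      rw [hseteq]
      exact h
  have hIsCF : IsCF G (2 * t + 1) φ := by
    constructor
    · intro e he
      induction e using Sym2.ind with
      | _ u v =>
        have hadj : G.Adj u v := G.mem_edgeSet.mp he
        have hit : lvl s(u, v) < t := by rw [hlvl]; exact hlt hadj
        rw [hφdef]
        simp only
        split_ifs <;> omega
    · intro u v hadj
      by_cases hbit : (c u).testBit ((c u ^^^ c v).log2) = false
      · exact oriented u v hadj hbit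
      · have hbitv : (c v).testBit ((c v ^^^ c u).log2) = false := by
          rw [Nat.xor_comm]
          have hne := htb hadj
          cases h : (c v).testBit ((c u ^^^ c v).log2)
          · rfl
          · rw [h] at hne
            cases h' : (c u).testBit ((c u ^^^ c v).log2)
            · exact absurd h' hbit
            · rw [h'] at hne; exact absurd rfl hne
        obtain ⟨col, hcol⟩ := oriented v u hadj.symm hbitv
        refine ⟨col, ?_⟩
        have hcomm : {e | e ∈ edgeNbhd G u v ∧ φ e = col}
            = {e | e ∈ edgeNbhd G v u ∧ φ e = col} := by
          simp only [edgeNbhd, Set.union_comm]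
        rw [hcomm]
        exact hcol
  have : 2 * t + 1 ∈ {k | ∃ ψ, IsCF G k ψ} := ⟨φ, hIsCF⟩
  calc cfIndex G ≤ 2 * t + 1 := Nat.sInf_le this
    _ = 2 * Nat.clog 2 G.chromaticNumber.toNat + 1 := by rw [ht, hn]
end

section
/- For n ≥ m ≥ 3, the conflict-free chromatic index of the complete bipartite graph K_{n,m} equals 3. -/
open SimpleGraph

variable {V : Type*}

namespace CF13
open Sum
variable {n m : ℕ}

/-- the 3-coloring -/
def gfun (i : Fin n) (j : Fin m) : ℕ :=
  if j.val = 0 then (if i.val = 0 then 2 else 1) else 0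

def ffun : (Fin n ⊕ Fin m) → (Fin n ⊕ Fin m) → ℕ
  | .inl i, .inr j => gfun i j
  | .inr j, .inl i => gfun i j
  | _, _ => 0

def φ3 : Sym2 (Fin n ⊕ Fin m) → ℕ :=
  Sym2.lift ⟨ffun, by rintro (a|a) (b|b) <;> rfl⟩

@[simp] lemma φ3_mk (i : Fin n) (j : Fin m) : φ3 s(inl i, inr j) = gfun i j := rfl

lemma gfun_eq_two {i : Fin n} {j : Fin m} : gfun i j = 2 ↔ j.val = 0 ∧ i.val = 0 := by
  unfold gfun; split_ifs <;> simp_all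

lemma gfun_eq_one {i : Fin n} {j : Fin m} : gfun i j = 1 ↔ j.val = 0 ∧ i.val ≠ 0 := by
  unfold gfun; split_ifs <;> simp_all

lemma edge_form {e : Sym2 (Fin n ⊕ Fin m)}
    (he : e ∈ (completeBipartiteGraph (Fin n) (Fin m)).edgeSet) :
    ∃ i j, e = s(inl i, inr j) := by
  induction e using Sym2.ind with
  | _ a b =>
    rw [mem_edgeSet] at he
    rcases a with i | j <;> rcases b with i' | j' <;> simp at he
    · exact ⟨i, j', rfl⟩
    · exact ⟨i', j, Sym2.eq_swap⟩

lemma sat_ij (hm : 3 ≤ m) (hnm : m ≤ n) (i : Fin n) (j : Fin m) :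
    ∃ c : ℕ, {e | e ∈ edgeNbhd (completeBipartiteGraph (Fin n) (Fin m)) (inl i) (inr j) ∧
      φ3 e = c}.ncard = 1 := by
  set G := completeBipartiteGraph (Fin n) (Fin m) with hG
  have hn0 : 0 < n := by omega
  have hm0 : 0 < m := by omega
  set i0 : Fin n := ⟨0, hn0⟩ with hi0
  set j0 : Fin m := ⟨0, hm0⟩ with hj0
  by_cases h : i.val = 0 ∨ j.val = 0
  · refine ⟨2, ?_⟩
    have hs : {e | e ∈ edgeNbhd G (inl i) (inr j) ∧ φ3 e = 2} = {s(inl i0, inr j0)} := by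
      ext e
      simp only [Set.mem_setOf_eq, Set.mem_singleton_iff]
      constructor
      · rintro ⟨hmem, hval⟩
        have heE : e ∈ G.edgeSet := by
          rcases hmem with h' | h' <;> exact h'.1
        obtain ⟨i', j', rfl⟩ := edge_form heE
        rw [φ3_mk, gfun_eq_two] at hval
        have hi' : i' = i0 := by apply Fin.ext; simpa [hi0] using hval.2
        have hj' : j' = j0 := by apply Fin.ext; simpa [hj0] using hval.1
        rw [hi', hj']
      · rintro rfl
        refine ⟨?_, by simp [gfun, hi0, hj0]⟩
        rcases h with h | h
        · left
          have hii : i = i0 := by apply Fin.ext; simpa [hi0] using h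
          rw [hii]
          exact (G.mk'_mem_incidenceSet_left_iff).2 (by simp [hG])
        · right
          have hjj : j = j0 := by apply Fin.ext; simpa [hj0] using h
          rw [hjj]
          exact (G.mk'_mem_incidenceSet_right_iff).2 (by simp [hG])
    rw [hs, Set.ncard_singleton]
  · push_neg at h
    obtain ⟨hi, hj⟩ := h
    refine ⟨1, ?_⟩
    have hs : {e | e ∈ edgeNbhd G (inl i) (inr j) ∧ φ3 e = 1} = {s(inl i, inr j0)} := by
      ext e
      simp only [Set.mem_setOf_eq, Set.mem_singleton_iff]
      constructor
      · rintro ⟨hmem, hval⟩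
        have heE : e ∈ G.edgeSet := by rcases hmem with h' | h' <;> exact h'.1
        obtain ⟨i', j', rfl⟩ := edge_form heE
        rw [φ3_mk, gfun_eq_one] at hval
        rcases hmem with h' | h'
        · have hmem2 : inl i ∈ s(inl i', inr j') := h'.2
          rw [Sym2.mem_iff] at hmem2
          rcases hmem2 with h3 | h3
          · have hii : i = i' := by injection h3
            subst hii
            have hj' : j' = j0 := by apply Fin.ext; simpa [hj0] using hval.1
            rw [hj']
          · exact absurd h3 (by simp)
        · have hmem2 : inr j ∈ s(inl i', inr j') := h'.2
          rw [Sym2.mem_iff] at hmem2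
          rcases hmem2 with h3 | h3
          · exact absurd h3 (by simp)
          · have : j = j' := by injection h3
            subst this
            exact absurd hval.1 (by omega)
      · rintro rfl
        constructor
        · left
          exact (G.mk'_mem_incidenceSet_left_iff).2 (by simp [hG])
        · simp [gfun, hi, hj0]
    rw [hs, Set.ncard_singleton]


/-- the set of edges at `x` colored `c` -/
def NE (n m : ℕ) (φ : Sym2 (Fin n ⊕ Fin m) → ℕ) (x : Fin n ⊕ Fin m) (c : ℕ) :
    Set (Sym2 (Fin n ⊕ Fin m)) :=
  {e | e ∈ (completeBipartiteGraph (Fin n) (Fin m)).incidenceSet x ∧ φ e = c}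

noncomputable def dd (n m : ℕ) (φ : Sym2 (Fin n ⊕ Fin m) → ℕ) (x : Fin n ⊕ Fin m) (c : ℕ) : ℕ :=
  (NE n m φ x c).ncard

variable {φ : Sym2 (Fin n ⊕ Fin m) → ℕ}

/-- φ < 2 on edges -/
lemma phi_lt (hb : ∀ e ∈ (completeBipartiteGraph (Fin n) (Fin m)).edgeSet, φ e < 2)
    (i : Fin n) (j : Fin m) : φ s(inl i, inr j) < 2 :=
  hb _ ((SimpleGraph.mem_edgeSet _).2 (by simp))

/-- incidence set is the union of the color classes -/
lemma incid_eq (hb : ∀ e ∈ (completeBipartiteGraph (Fin n) (Fin m)).edgeSet, φ e < 2)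
    (x : Fin n ⊕ Fin m) :
    (completeBipartiteGraph (Fin n) (Fin m)).incidenceSet x = NE n m φ x 0 ∪ NE n m φ x 1 := by
  ext e
  simp only [NE, Set.mem_union, Set.mem_setOf_eq]
  constructor
  · intro he
    have := hb e he.1
    interval_cases h : φ e
    · exact Or.inl ⟨he, rfl⟩
    · exact Or.inr ⟨he, rfl⟩
  · rintro (h | h) <;> exact h.1

lemma deg_ge (hm : 3 ≤ m) (hnm : m ≤ n)
    (hb : ∀ e ∈ (completeBipartiteGraph (Fin n) (Fin m)).edgeSet, φ e < 2)
    (x : Fin n ⊕ Fin m) : 3 ≤ dd n m φ x 0 + dd n m φ x 1 := by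
  set G := completeBipartiteGraph (Fin n) (Fin m) with hG
  have hdisj : Disjoint (NE n m φ x 0) (NE n m φ x 1) := by
    rw [Set.disjoint_left]
    rintro e ⟨_, h0⟩ ⟨_, h1⟩
    omega
  have hU : dd n m φ x 0 + dd n m φ x 1 = (G.incidenceSet x).ncard := by
    unfold dd
    rw [incid_eq hb x, Set.ncard_union_eq hdisj (Set.toFinite _) (Set.toFinite _)]
  rw [hU]
  -- a 3-element subset of the incidence set
  rcases x with i | j
  · set e0 : Sym2 (Fin n ⊕ Fin m) := s(inl i, inr ⟨0, by omega⟩) with he0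
    set e1 : Sym2 (Fin n ⊕ Fin m) := s(inl i, inr ⟨1, by omega⟩) with he1
    set e2 : Sym2 (Fin n ⊕ Fin m) := s(inl i, inr ⟨2, by omega⟩) with he2
    have hsub : ({e0, e1, e2} : Set (Sym2 (Fin n ⊕ Fin m))) ⊆ G.incidenceSet (inl i) := by
      rintro e (rfl | rfl | rfl) <;>
        exact (G.mk'_mem_incidenceSet_left_iff).2 (by simp [hG])
    have h3 : ({e0, e1, e2} : Set (Sym2 (Fin n ⊕ Fin m))).ncard = 3 := by
      rw [Set.ncard_eq_three]
      exact ⟨e0, e1, e2, by simp [he0, he1, he2, Sym2.eq_iff, Fin.ext_iff],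
        by simp [he0, he2, Sym2.eq_iff, Fin.ext_iff],
        by simp [he1, he2, Sym2.eq_iff, Fin.ext_iff], rfl⟩
    calc 3 = ({e0, e1, e2} : Set (Sym2 (Fin n ⊕ Fin m))).ncard := h3.symm
      _ ≤ _ := Set.ncard_le_ncard hsub (Set.toFinite _)
  · set e0 : Sym2 (Fin n ⊕ Fin m) := s(inl ⟨0, by omega⟩, inr j) with he0
    set e1 : Sym2 (Fin n ⊕ Fin m) := s(inl ⟨1, by omega⟩, inr j) with he1
    set e2 : Sym2 (Fin n ⊕ Fin m) := s(inl ⟨2, by omega⟩, inr j) with he2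
    have hsub : ({e0, e1, e2} : Set (Sym2 (Fin n ⊕ Fin m))) ⊆ G.incidenceSet (inr j) := by
      rintro e (rfl | rfl | rfl) <;>
        exact (G.mk'_mem_incidenceSet_right_iff).2 (by simp [hG])
    have h3 : ({e0, e1, e2} : Set (Sym2 (Fin n ⊕ Fin m))).ncard = 3 := by
      rw [Set.ncard_eq_three]
      exact ⟨e0, e1, e2, by simp [he0, he1, he2, Sym2.eq_iff, Fin.ext_iff],
        by simp [he0, he2, Sym2.eq_iff, Fin.ext_iff],
        by simp [he1, he2, Sym2.eq_iff, Fin.ext_iff], rfl⟩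
    calc 3 = ({e0, e1, e2} : Set (Sym2 (Fin n ⊕ Fin m))).ncard := h3.symm
      _ ≤ _ := Set.ncard_le_ncard hsub (Set.toFinite _)

lemma deg_ge' (hm : 3 ≤ m) (hnm : m ≤ n)
    (hb : ∀ e ∈ (completeBipartiteGraph (Fin n) (Fin m)).edgeSet, φ e < 2)
    (x : Fin n ⊕ Fin m) {c : ℕ} (hc : c < 2) :
    3 ≤ dd n m φ x c + dd n m φ x (1 - c) := by
  have := deg_ge hm hnm hb x
  interval_cases c
  · simpa using this
  · simpa [add_comm] using this

/-- the key structure lemma for a satisfied edge -/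
lemma key (hb : ∀ e ∈ (completeBipartiteGraph (Fin n) (Fin m)).edgeSet, φ e < 2)
    (i : Fin n) (j : Fin m)
    (hsat : ∃ c : ℕ, {e | e ∈ edgeNbhd (completeBipartiteGraph (Fin n) (Fin m))
      (inl i) (inr j) ∧ φ e = c}.ncard = 1) :
    ∃ c < 2, (φ s(inl i, inr j) = c ∧ dd n m φ (inl i) c = 1 ∧ dd n m φ (inr j) c = 1) ∨
      (φ s(inl i, inr j) ≠ c ∧ dd n m φ (inl i) c + dd n m φ (inr j) c = 1) := by
  set G := completeBipartiteGraph (Fin n) (Fin m) with hG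
  obtain ⟨c, hc⟩ := hsat
  have hadj : G.Adj (inl i) (inr j) := by simp [hG]
  have hset : {e | e ∈ edgeNbhd G (inl i) (inr j) ∧ φ e = c}
      = NE n m φ (inl i) c ∪ NE n m φ (inr j) c := by
    ext e
    simp only [edgeNbhd, NE, Set.mem_union, Set.mem_setOf_eq, Set.mem_union]
    tauto
  rw [hset] at hc
  have hiesub : NE n m φ (inl i) c ∩ NE n m φ (inr j) c ⊆ {s(inl i, inr j)} := by
    rintro e ⟨⟨h1, _⟩, ⟨h2, _⟩⟩
    exact G.incidenceSet_inter_incidenceSet_subset (by simp) ⟨h1, h2⟩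
  have hie := Set.ncard_union_add_ncard_inter (NE n m φ (inl i) c) (NE n m φ (inr j) c)
    (Set.toFinite _) (Set.toFinite _)
  by_cases hfc : φ s(inl i, inr j) = c
  · -- intersection is exactly the edge itself
    have hmemi : s(inl i, inr j) ∈ NE n m φ (inl i) c :=
      ⟨(G.mk'_mem_incidenceSet_left_iff).2 hadj, hfc⟩
    have hmemj : s(inl i, inr j) ∈ NE n m φ (inr j) c :=
      ⟨(G.mk'_mem_incidenceSet_right_iff).2 hadj, hfc⟩
    have hcap : NE n m φ (inl i) c ∩ NE n m φ (inr j) c = {s(inl i, inr j)} :=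
      hiesub.antisymm (by rintro e rfl; exact ⟨hmemi, hmemj⟩)
    rw [hc, hcap, Set.ncard_singleton] at hie
    have hi1 : 0 < dd n m φ (inl i) c :=
      (Set.ncard_pos (Set.toFinite _)).2 ⟨_, hmemi⟩
    have hj1 : 0 < dd n m φ (inr j) c :=
      (Set.ncard_pos (Set.toFinite _)).2 ⟨_, hmemj⟩
    have hclt : c < 2 := hfc ▸ phi_lt hb i j
    exact ⟨c, hclt, Or.inl ⟨hfc, by unfold dd at *; omega, by unfold dd at *; omega⟩⟩
  · have hcap : NE n m φ (inl i) c ∩ NE n m φ (inr j) c = ∅ := by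
      rw [Set.eq_empty_iff_forall_notMem]
      intro e he
      have := hiesub he
      rw [Set.mem_singleton_iff] at this
      subst this
      exact hfc he.1.2
    rw [hc, hcap, Set.ncard_empty] at hie
    have hsum : dd n m φ (inl i) c + dd n m φ (inr j) c = 1 := by unfold dd; omega
    have hclt : c < 2 := by
      -- one of the two classes is nonempty
      have : 0 < dd n m φ (inl i) c ∨ 0 < dd n m φ (inr j) c := by omega
      rcases this with h | h
      · obtain ⟨e, he⟩ := (Set.ncard_pos (Set.toFinite _)).1 h
        have h1 := hb e he.1.1
        have h2 := he.2
        omega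
      · obtain ⟨e, he⟩ := (Set.ncard_pos (Set.toFinite _)).1 h
        have h1 := hb e he.1.1
        have h2 := he.2
        omega
    exact ⟨c, hclt, Or.inr ⟨hfc, hsum⟩⟩

lemma pick_left (i : Fin n) (c : ℕ) (h : dd n m φ (inl i) c ≠ 0) :
    ∃ j', φ s(inl i, inr j') = c := by
  obtain ⟨e, he⟩ := Set.nonempty_of_ncard_ne_zero h
  obtain ⟨⟨heE, hex⟩, hec⟩ := he
  obtain ⟨i', j', rfl⟩ := edge_form heE
  rw [Sym2.mem_iff] at hex
  rcases hex with h3 | h3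
  · have : i = i' := by injection h3
    subst this; exact ⟨j', hec⟩
  · exact absurd h3 (by simp)

lemma pick_right (j : Fin m) (c : ℕ) (h : dd n m φ (inr j) c ≠ 0) :
    ∃ i', φ s(inl i', inr j) = c := by
  obtain ⟨e, he⟩ := Set.nonempty_of_ncard_ne_zero h
  obtain ⟨⟨heE, hex⟩, hec⟩ := he
  obtain ⟨i', j', rfl⟩ := edge_form heE
  rw [Sym2.mem_iff] at hex
  rcases hex with h3 | h3
  · exact absurd h3 (by simp)
  · have : j = j' := by injection h3
    subst this; exact ⟨i', hec⟩

lemma empty_left (i : Fin n) (c : ℕ) (h : dd n m φ (inl i) c = 0)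
    (j' : Fin m) : φ s(inl i, inr j') ≠ c := by
  intro hc
  have hmem : s(inl i, inr j') ∈ NE n m φ (inl i) c :=
    ⟨(SimpleGraph.mk'_mem_incidenceSet_left_iff _).2 (by simp), hc⟩
  have := (Set.ncard_eq_zero (Set.toFinite _)).1 h
  rw [this] at hmem
  exact hmem

lemma empty_right (j : Fin m) (c : ℕ) (h : dd n m φ (inr j) c = 0)
    (i' : Fin n) : φ s(inl i', inr j) ≠ c := by
  intro hc
  have hmem : s(inl i', inr j) ∈ NE n m φ (inr j) c :=
    ⟨(SimpleGraph.mk'_mem_incidenceSet_right_iff _).2 (by simp), hc⟩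
  have := (Set.ncard_eq_zero (Set.toFinite _)).1 h
  rw [this] at hmem
  exact hmem



lemma stepA (hm : 3 ≤ m) (hnm : m ≤ n)
    (hb : ∀ e ∈ (completeBipartiteGraph (Fin n) (Fin m)).edgeSet, φ e < 2)
    (hsat : ∀ (i : Fin n) (j : Fin m), ∃ c : ℕ,
      {e | e ∈ edgeNbhd (completeBipartiteGraph (Fin n) (Fin m)) (inl i) (inr j) ∧
        φ e = c}.ncard = 1)
    (i : Fin n) (j : Fin m) (c : ℕ) (hφc : φ s(inl i, inr j) = c)
    (hdi : dd n m φ (inl i) c = 1) (hdj : dd n m φ (inr j) c = 1) : False := by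
  have hclt : c < 2 := by rw [← hφc]; exact phi_lt hb i j
  have hdi' : 2 ≤ dd n m φ (inl i) (1 - c) := by
    have := deg_ge' hm hnm hb (inl i) hclt; omega
  have hdj' : 2 ≤ dd n m φ (inr j) (1 - c) := by
    have := deg_ge' hm hnm hb (inr j) hclt; omega
  have hne3 : dd n m φ (inr j) (1 - c) ≠ 0 := by omega
  obtain ⟨i₃, hi₃⟩ := pick_right j (1 - c) hne3
  obtain ⟨c₂, hc₂, hA | hB⟩ := key hb i₃ j (hsat i₃ j)
  · obtain ⟨h1, h2, h3⟩ := hA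
    have hc2 : c₂ = 1 - c := by rw [hi₃] at h1; omega
    rw [hc2] at h3; omega
  · obtain ⟨h1, h2⟩ := hB
    have hc2 : c₂ = c := by rw [hi₃] at h1; omega
    rw [hc2] at h2
    have hzero : dd n m φ (inl i₃) c = 0 := by omega
    have hall : ∀ j', φ s(inl i₃, inr j') ≠ c := empty_left i₃ c hzero
    have hdi₃ : 3 ≤ dd n m φ (inl i₃) (1 - c) := by
      have := deg_ge' hm hnm hb (inl i₃) hclt; omega
    have hforall : ∀ j', dd n m φ (inr j') c = 1 := by
      intro j'
      have hlt := phi_lt hb i₃ j'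
      have hne := hall j'
      obtain ⟨c₃, hc₃, hA | hB⟩ := key hb i₃ j' (hsat i₃ j')
      · obtain ⟨g1, g2, g3⟩ := hA
        have hc3 : c₃ = 1 - c := by omega
        rw [hc3] at g2; omega
      · obtain ⟨g1, g2⟩ := hB
        have hc3 : c₃ = c := by omega
        rw [hc3] at g2; omega
    have hne2 : dd n m φ (inl i) (1 - c) ≠ 0 := by omega
    obtain ⟨j₂, hj₂⟩ := pick_left i (1 - c) hne2
    obtain ⟨c₄, hc₄, hA | hB⟩ := key hb i j₂ (hsat i j₂)
    · obtain ⟨g1, g2, g3⟩ := hA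
      have hc4 : c₄ = 1 - c := by rw [hj₂] at g1; omega
      rw [hc4] at g2; omega
    · obtain ⟨g1, g2⟩ := hB
      have hc4 : c₄ = c := by rw [hj₂] at g1; omega
      rw [hc4] at g2
      have := hforall j₂
      omega

lemma no_two (hm : 3 ≤ m) (hnm : m ≤ n)
    (hb : ∀ e ∈ (completeBipartiteGraph (Fin n) (Fin m)).edgeSet, φ e < 2)
    (hsat : ∀ (i : Fin n) (j : Fin m), ∃ c : ℕ,
      {e | e ∈ edgeNbhd (completeBipartiteGraph (Fin n) (Fin m)) (inl i) (inr j) ∧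
        φ e = c}.ncard = 1) : False := by
  have hn0 : 0 < n := by omega
  have hm0 : 0 < m := by omega
  set i0 : Fin n := ⟨0, hn0⟩
  set j0 : Fin m := ⟨0, hm0⟩
  obtain ⟨c, hc, hA | hB⟩ := key hb i0 j0 (hsat i0 j0)
  · exact stepA hm hnm hb hsat i0 j0 c hA.1 hA.2.1 hA.2.2
  · obtain ⟨h1, h2⟩ := hB
    have hcase : dd n m φ (inl i0) c = 1 ∨ dd n m φ (inr j0) c = 1 := by omega
    rcases hcase with hcase | hcase
    · have hne4 : dd n m φ (inl i0) c ≠ 0 := by omega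
      obtain ⟨j₄, hj₄⟩ := pick_left i0 c hne4
      obtain ⟨c₅, hc₅, hA | hB⟩ := key hb i0 j₄ (hsat i0 j₄)
      · exact stepA hm hnm hb hsat i0 j₄ c₅ hA.1 hA.2.1 hA.2.2
      · obtain ⟨g1, g2⟩ := hB
        have hc5 : c₅ = 1 - c := by rw [hj₄] at g1; omega
        rw [hc5] at g2
        have := deg_ge' hm hnm hb (inl i0) hc
        omega
    · have hne5 : dd n m φ (inr j0) c ≠ 0 := by omega
      obtain ⟨i₅, hi₅⟩ := pick_right j0 c hne5
      obtain ⟨c₅, hc₅, hA | hB⟩ := key hb i₅ j0 (hsat i₅ j0)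
      · exact stepA hm hnm hb hsat i₅ j0 c₅ hA.1 hA.2.1 hA.2.2
      · obtain ⟨g1, g2⟩ := hB
        have hc5 : c₅ = 1 - c := by rw [hi₅] at g1; omega
        rw [hc5] at g2
        have := deg_ge' hm hnm hb (inr j0) hc
        omega



lemma isCF3 (hm : 3 ≤ m) (hnm : m ≤ n) :
    IsCF (completeBipartiteGraph (Fin n) (Fin m)) 3 φ3 := by
  constructor
  · intro e he
    obtain ⟨i, j, rfl⟩ := edge_form he
    rw [φ3_mk]; unfold gfun; split_ifs <;> omega
  · intro u v hadj
    rcases u with i | j <;> rcases v with i' | j'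
    · simp at hadj
    · exact sat_ij hm hnm i j'
    · have hcomm : edgeNbhd (completeBipartiteGraph (Fin n) (Fin m)) (inr j) (inl i')
          = edgeNbhd (completeBipartiteGraph (Fin n) (Fin m)) (inl i') (inr j) := by
        unfold edgeNbhd; exact Set.union_comm _ _
      rw [hcomm]
      exact sat_ij hm hnm i' j
    · simp at hadj

end CF13

theorem stmt_13 (n m : ℕ) (hm : 3 ≤ m) (hnm : m ≤ n) :
    cfIndex (completeBipartiteGraph (Fin n) (Fin m)) = 3 := by
  have h3 : 3 ∈ {k | ∃ φ, IsCF (completeBipartiteGraph (Fin n) (Fin m)) k φ} :=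
    ⟨CF13.φ3, CF13.isCF3 hm hnm⟩
  unfold cfIndex
  refine le_antisymm (Nat.sInf_le h3) (le_csInf ⟨3, h3⟩ ?_)
  rintro k ⟨φ, hφ1, hφ2⟩
  by_contra hlt
  push_neg at hlt
  have hb : ∀ e ∈ (completeBipartiteGraph (Fin n) (Fin m)).edgeSet, φ e < 2 := by
    intro e he
    have := hφ1 e he
    omega
  exact CF13.no_two hm hnm hb (fun i j => hφ2 (by simp))
end

section
/- Let T be a tree with at least 2 edges. Then χ'_CF(T) = 2 if and only if there exists a nonempty proper subset F ⊆ E(T) such that for every edge uv of T: if uv ∈ F then d_F(u) + d_F(v) = 2 or (d_T(u) − d_F(u)) + (d_T(v) − d_F(v)) = 1; and if uv ∉ F then d_F(u) + d_F(v) = 1 or (d_T(u) − d_F(u)) + (d_T(v) − d_F(v)) = 2. -/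
open SimpleGraph

variable {V : Type*}

section helpers
set_option linter.unusedSectionVars false
variable [Fintype V] {T : SimpleGraph V} {u v : V} {F : Set (Sym2 V)}

lemma edgeNbhd_subset' : edgeNbhd T u v ⊆ T.edgeSet :=
  Set.union_subset (T.incidenceSet_subset u) (T.incidenceSet_subset v)

lemma edegOn_eq_inc (hF : F ⊆ T.edgeSet) (w : V) :
    edegOn F w = (T.incidenceSet w ∩ F).ncard := by
  unfold edegOn
  congr 1
  ext e
  simp only [Set.mem_setOf_eq, Set.mem_inter_iff, SimpleGraph.incidenceSet, Set.mem_setOf_eq]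
  exact ⟨fun ⟨hf, hw⟩ => ⟨⟨hF hf, hw⟩, hf⟩, fun ⟨⟨_, hw⟩, hf⟩ => ⟨hf, hw⟩⟩

lemma count_lemma_aux (hF : F ⊆ T.edgeSet) (h : T.Adj u v) :
    (edgeNbhd T u v ∩ F).ncard + ({s(u,v)} ∩ F : Set (Sym2 V)).ncard
      = edegOn F u + edegOn F v := by
  have h1 := Set.ncard_union_add_ncard_inter (T.incidenceSet u ∩ F) (T.incidenceSet v ∩ F)
    (Set.toFinite _) (Set.toFinite _)
  have hu : T.incidenceSet u ∩ F ∪ T.incidenceSet v ∩ F = edgeNbhd T u v ∩ F := by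
    rw [edgeNbhd, Set.union_inter_distrib_right]
  have hi : (T.incidenceSet u ∩ F) ∩ (T.incidenceSet v ∩ F) = {s(u,v)} ∩ F := by
    rw [← T.incidenceSet_inter_incidenceSet_of_adj h]
    ext e; simp only [Set.mem_inter_iff]; tauto
  rw [hu, hi] at h1
  rw [h1, edegOn_eq_inc hF, edegOn_eq_inc hF]

lemma count_mem (hF : F ⊆ T.edgeSet) (h : T.Adj u v) (hm : s(u,v) ∈ F) :
    (edgeNbhd T u v ∩ F).ncard + 1 = edegOn F u + edegOn F v := by
  have h1 := count_lemma_aux hF h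
  have h2 : ({s(u,v)} ∩ F : Set (Sym2 V)) = {s(u,v)} :=
    Set.inter_eq_left.2 (Set.singleton_subset_iff.2 hm)
  rwa [h2, Set.ncard_singleton] at h1

lemma count_not (hF : F ⊆ T.edgeSet) (h : T.Adj u v) (hm : s(u,v) ∉ F) :
    (edgeNbhd T u v ∩ F).ncard = edegOn F u + edegOn F v := by
  have h1 := count_lemma_aux hF h
  rwa [Set.singleton_inter_eq_empty.2 hm, Set.ncard_empty, add_zero] at h1

lemma edegOn_diff (hF : F ⊆ T.edgeSet) (w : V) :
    edegOn (T.edgeSet \ F) w = edegOn T.edgeSet w - edegOn F w := by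
  unfold edegOn
  have hsub : {e ∈ F | w ∈ e} ⊆ {e ∈ T.edgeSet | w ∈ e} := fun e ⟨hf, hw⟩ => ⟨hF hf, hw⟩
  have heq : {e ∈ T.edgeSet \ F | w ∈ e} = {e ∈ T.edgeSet | w ∈ e} \ {e ∈ F | w ∈ e} := by
    ext e
    simp only [Set.mem_setOf_eq, Set.mem_diff]
    constructor
    · rintro ⟨⟨he, hnf⟩, hw⟩; exact ⟨⟨he, hw⟩, fun h => hnf h.1⟩
    · rintro ⟨⟨he, hw⟩, hn⟩; exact ⟨⟨he, fun hf => hn ⟨hf, hw⟩⟩, hw⟩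
  rw [heq, Set.ncard_diff hsub (Set.toFinite _)]

lemma edegOn_le (hF : F ⊆ T.edgeSet) (w : V) : edegOn F w ≤ edegOn T.edgeSet w :=
  Set.ncard_le_ncard (fun e ⟨hf, hw⟩ => ⟨hF hf, hw⟩) (Set.toFinite _)

lemma walk_stay (hu : T.neighborSet u = {v}) (hv : T.neighborSet v = {u}) :
    ∀ {a w : V} (_ : T.Walk a w), (a = u ∨ a = v) → (w = u ∨ w = v) := by
  intro a w p
  induction p with
  | nil => exact id
  | cons h p ih =>
    rename_i a b w
    intro ha
    apply ih
    rcases ha with rfl | rfl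
    · right
      have hb : b ∈ T.neighborSet a := h
      rw [hu] at hb
      exact hb
    · left
      have hb : b ∈ T.neighborSet a := h
      rw [hv] at hb
      exact hb

lemma card_V_ge (hT : T.IsTree) (hE : 2 ≤ T.edgeSet.ncard) : 3 ≤ Fintype.card V := by
  classical
  have h := hT.card_edgeFinset
  have h2 : T.edgeSet.ncard = T.edgeFinset.card := by
    rw [← SimpleGraph.coe_edgeFinset, Set.ncard_coe_finset]
  omega

lemma deg_sum_three (hT : T.IsTree) (hE : 2 ≤ T.edgeSet.ncard) (h : T.Adj u v) :
    3 ≤ edegOn T.edgeSet u + edegOn T.edgeSet v := by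
  classical
  have huv : s(u,v) ∈ T.incidenceSet u := T.mk'_mem_incidenceSet_left_iff.2 h
  have hvv : s(u,v) ∈ T.incidenceSet v := T.mk'_mem_incidenceSet_right_iff.2 h
  have hdu : edegOn T.edgeSet u = (T.incidenceSet u).ncard := by
    rw [edegOn_eq_inc (le_refl _), Set.inter_eq_left.2 (T.incidenceSet_subset _)]
  have hdv : edegOn T.edgeSet v = (T.incidenceSet v).ncard := by
    rw [edegOn_eq_inc (le_refl _), Set.inter_eq_left.2 (T.incidenceSet_subset _)]
  have h1u : 0 < (T.incidenceSet u).ncard :=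
    (Set.ncard_pos (Set.toFinite _)).2 ⟨_, huv⟩
  have h1v : 0 < (T.incidenceSet v).ncard :=
    (Set.ncard_pos (Set.toFinite _)).2 ⟨_, hvv⟩
  rw [hdu, hdv]
  by_contra hc
  push_neg at hc
  have hcu : (T.incidenceSet u).ncard = 1 := by omega
  have hcv : (T.incidenceSet v).ncard = 1 := by omega
  have hsu : T.incidenceSet u = {s(u,v)} := by
    obtain ⟨a, ha⟩ := (Set.ncard_eq_one).1 hcu
    rw [ha] at huv ⊢
    rw [Set.mem_singleton_iff.1 huv]
  have hsv : T.incidenceSet v = {s(u,v)} := by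
    obtain ⟨a, ha⟩ := (Set.ncard_eq_one).1 hcv
    rw [ha] at hvv ⊢
    rw [Set.mem_singleton_iff.1 hvv]
  have hnu : T.neighborSet u = {v} := by
    ext x
    simp only [SimpleGraph.mem_neighborSet, Set.mem_singleton_iff]
    constructor
    · intro hx
      have hxx : s(u,x) ∈ T.incidenceSet u := T.mk'_mem_incidenceSet_left_iff.2 hx
      rw [hsu, Set.mem_singleton_iff] at hxx
      exact Sym2.congr_right.1 hxx
    · rintro rfl; exact h
  have hnv : T.neighborSet v = {u} := by
    ext x
    simp only [SimpleGraph.mem_neighborSet, Set.mem_singleton_iff]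
    constructor
    · intro hx
      have hxx : s(v,x) ∈ T.incidenceSet v := T.mk'_mem_incidenceSet_left_iff.2 hx
      rw [hsv, Set.mem_singleton_iff] at hxx
      rcases Sym2.eq_iff.1 hxx with ⟨h1, _⟩ | ⟨_, h2⟩
      · exact absurd h1 h.ne'
      · exact h2
    · rintro rfl; exact h.symm
  have hV := card_V_ge hT hE
  have hcompl : (({u, v} : Finset V)ᶜ).Nonempty := by
    rw [← Finset.card_pos, Finset.card_compl]
    have h2 : ({u, v} : Finset V).card ≤ 2 :=
      (Finset.card_insert_le _ _).trans (by simp)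
    omega
  obtain ⟨w, hw⟩ := hcompl
  simp only [Finset.mem_compl, Finset.mem_insert, Finset.mem_singleton] at hw
  push_neg at hw
  obtain ⟨p⟩ := hT.isConnected.preconnected u w
  rcases walk_stay hnu hnv p (Or.inl rfl) with rfl | rfl
  · exact hw.1 rfl
  · exact hw.2 rfl

lemma ncard_nbhd (hT : T.IsTree) (hE : 2 ≤ T.edgeSet.ncard) (h : T.Adj u v) :
    2 ≤ (edgeNbhd T u v).ncard := by
  have h1 := count_mem (le_refl T.edgeSet) h (T.mem_edgeSet.mpr h)
  rw [Set.inter_eq_left.2 edgeNbhd_subset'] at h1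
  have h3 := deg_sum_three hT hE h
  omega

end helpers

theorem stmt_14 [Fintype V] (T : SimpleGraph V) (hT : T.IsTree)
    (hE : 2 ≤ T.edgeSet.ncard) :
    cfIndex T = 2 ↔
      ∃ F : Set (Sym2 V), F ⊆ T.edgeSet ∧ F.Nonempty ∧ F ≠ T.edgeSet ∧
        ∀ ⦃u v⦄, T.Adj u v →
          (s(u, v) ∈ F →
            (edegOn F u + edegOn F v = 2 ∨
              (edegOn T.edgeSet u - edegOn F u) + (edegOn T.edgeSet v - edegOn F v) = 1)) ∧
          (s(u, v) ∉ F →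
            (edegOn F u + edegOn F v = 1 ∨
              (edegOn T.edgeSet u - edegOn F u) + (edegOn T.edgeSet v - edegOn F v) = 2)) := by
  classical
  have hES : T.edgeSet.Nonempty := by
    have := (Set.ncard_pos (Set.toFinite _)).1 (by omega : 0 < T.edgeSet.ncard)
    exact this
  obtain ⟨e0, he0⟩ := hES
  constructor
  · -- forward
    intro h2
    have hne : {k | ∃ φ, IsCF T k φ}.Nonempty := by
      by_contra hc
      rw [Set.not_nonempty_iff_eq_empty] at hc
      rw [cfIndex, hc, Nat.sInf_empty] at h2
      omega
    have hmem : 2 ∈ {k | ∃ φ, IsCF T k φ} := by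
      have := Nat.sInf_mem hne
      rwa [show sInf {k | ∃ φ, IsCF T k φ} = 2 from h2] at this
    obtain ⟨φ, hφlt, hφsat⟩ := hmem
    set F : Set (Sym2 V) := {e ∈ T.edgeSet | φ e = 1} with hFdef
    have hF : F ⊆ T.edgeSet := fun e he => he.1
    have hF' : T.edgeSet \ F ⊆ T.edgeSet := Set.diff_subset
    -- set equalities
    have hset1 : ∀ u v, T.Adj u v →
        {e | e ∈ edgeNbhd T u v ∧ φ e = 1} = edgeNbhd T u v ∩ F := by
      intro u v huv
      ext e
      simp only [Set.mem_setOf_eq, Set.mem_inter_iff, hFdef, Set.mem_setOf_eq]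
      exact ⟨fun ⟨hn, hc⟩ => ⟨hn, edgeNbhd_subset' hn, hc⟩, fun ⟨hn, _, hc⟩ => ⟨hn, hc⟩⟩
    have hset0 : ∀ u v, T.Adj u v →
        {e | e ∈ edgeNbhd T u v ∧ φ e = 0} = edgeNbhd T u v ∩ (T.edgeSet \ F) := by
      intro u v huv
      ext e
      simp only [Set.mem_setOf_eq, Set.mem_inter_iff, Set.mem_diff, hFdef, Set.mem_setOf_eq]
      constructor
      · rintro ⟨hn, hc⟩
        exact ⟨hn, edgeNbhd_subset' hn, fun h => by omega⟩
      · rintro ⟨hn, he, hnf⟩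
        have := hφlt e (edgeNbhd_subset' hn)
        have h1 : φ e ≠ 1 := fun h => hnf ⟨he, h⟩
        exact ⟨hn, by omega⟩
    have resolve : ∀ u v, T.Adj u v →
        (edgeNbhd T u v ∩ F).ncard = 1 ∨ (edgeNbhd T u v ∩ (T.edgeSet \ F)).ncard = 1 := by
      intro u v huv
      obtain ⟨c, hc⟩ := hφsat huv
      match c with
      | 0 => right; rwa [hset0 u v huv] at hc
      | 1 => left; rwa [hset1 u v huv] at hc
      | (n+2) =>
        exfalso
        have : {e | e ∈ edgeNbhd T u v ∧ φ e = n + 2} = ∅ := by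
          ext e
          simp only [Set.mem_setOf_eq, Set.mem_empty_iff_false, iff_false, not_and]
          intro hn
          have := hφlt e (edgeNbhd_subset' hn)
          omega
        rw [this, Set.ncard_empty] at hc
        omega
    refine ⟨F, hF, ?_, ?_, ?_⟩
    · -- F nonempty
      rcases Set.eq_empty_or_nonempty F with hFe | hFne
      · exfalso
        induction e0 using Sym2.ind with
        | _ u v =>
        have huv : T.Adj u v := (T.mem_edgeSet).1 he0
        rcases resolve u v huv with hr | hr
        · rw [hFe, Set.inter_empty, Set.ncard_empty] at hr; omega
        · rw [hFe, Set.diff_empty, Set.inter_eq_left.2 edgeNbhd_subset'] at hr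
          have := ncard_nbhd hT hE huv
          omega
      · exact hFne
    · -- F ≠ edgeSet
      intro hFe
      induction e0 using Sym2.ind with
      | _ u v =>
      have huv : T.Adj u v := (T.mem_edgeSet).1 he0
      rcases resolve u v huv with hr | hr
      · rw [hFe, Set.inter_eq_left.2 edgeNbhd_subset'] at hr
        have := ncard_nbhd hT hE huv
        omega
      · rw [hFe, Set.diff_self, Set.inter_empty, Set.ncard_empty] at hr; omega
    · -- edge conditions
      intro u v huv
      constructor
      · intro hm
        rcases resolve u v huv with hr | hr
        · left
          have := count_mem hF huv hm
          omega
        · right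
          have hm' : s(u,v) ∉ T.edgeSet \ F := fun h => h.2 hm
          have hcnt := count_not hF' huv hm'
          rw [edegOn_diff hF, edegOn_diff hF] at hcnt
          omega
      · intro hm
        rcases resolve u v huv with hr | hr
        · left
          have := count_not hF huv hm
          omega
        · right
          have hm' : s(u,v) ∈ T.edgeSet \ F := ⟨(T.mem_edgeSet.mpr huv), hm⟩
          have hcnt := count_mem hF' huv hm'
          rw [edegOn_diff hF, edegOn_diff hF] at hcnt
          omega
  · -- reverse
    rintro ⟨F, hF, hFne, hFneq, hcond⟩
    have hF' : T.edgeSet \ F ⊆ T.edgeSet := Set.diff_subset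
    set φ : Sym2 V → ℕ := fun e => if e ∈ F then 1 else 0 with hφdef
    have hset1 : ∀ u v, T.Adj u v →
        {e | e ∈ edgeNbhd T u v ∧ φ e = 1} = edgeNbhd T u v ∩ F := by
      intro u v huv
      ext e
      simp only [Set.mem_setOf_eq, Set.mem_inter_iff, hφdef]
      split_ifs with h
      · tauto
      · simp [h]
    have hset0 : ∀ u v, T.Adj u v →
        {e | e ∈ edgeNbhd T u v ∧ φ e = 0} = edgeNbhd T u v ∩ (T.edgeSet \ F) := by
      intro u v huv
      ext e
      simp only [Set.mem_setOf_eq, Set.mem_inter_iff, Set.mem_diff, hφdef]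
      split_ifs with h
      · simp only [one_ne_zero, and_false, false_iff, not_and, not_not]
        intros
        exact h
      · constructor
        · rintro ⟨hn, _⟩
          exact ⟨hn, edgeNbhd_subset' hn, h⟩
        · rintro ⟨hn, _, _⟩
          exact ⟨hn, rfl⟩
    have hcf : IsCF T 2 φ := by
      refine ⟨fun e _ => by simp only [hφdef]; split_ifs <;> omega, ?_⟩
      intro u v huv
      obtain ⟨h1, h2⟩ := hcond huv
      by_cases hm : s(u,v) ∈ F
      · rcases h1 hm with hd | hd
        · refine ⟨1, ?_⟩
          rw [hset1 u v huv]
          have := count_mem hF huv hm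
          omega
        · refine ⟨0, ?_⟩
          rw [hset0 u v huv]
          have hm' : s(u,v) ∉ T.edgeSet \ F := fun h => h.2 hm
          have hcnt := count_not hF' huv hm'
          rw [edegOn_diff hF, edegOn_diff hF] at hcnt
          omega
      · rcases h2 hm with hd | hd
        · refine ⟨1, ?_⟩
          rw [hset1 u v huv]
          have := count_not hF huv hm
          omega
        · refine ⟨0, ?_⟩
          rw [hset0 u v huv]
          have hm' : s(u,v) ∈ T.edgeSet \ F := ⟨(T.mem_edgeSet.mpr huv), hm⟩
          have hcnt := count_mem hF' huv hm'
          rw [edegOn_diff hF, edegOn_diff hF] at hcnt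
          omega
    have hmem : 2 ∈ {k | ∃ ψ, IsCF T k ψ} := ⟨φ, hcf⟩
    refine le_antisymm (Nat.sInf_le hmem) ?_
    apply le_csInf ⟨2, hmem⟩
    rintro k ⟨ψ, hψlt, hψsat⟩
    by_contra hk
    push_neg at hk
    interval_cases k
    · exact absurd (hψlt e0 he0) (by omega)
    · -- k = 1 : all edges colored 0
      induction e0 using Sym2.ind with
      | _ u v =>
      have huv : T.Adj u v := (T.mem_edgeSet).1 he0
      obtain ⟨c, hc⟩ := hψsat huv
      match c with
      | 0 =>
        have hseq : {e | e ∈ edgeNbhd T u v ∧ ψ e = 0} = edgeNbhd T u v := by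
          ext e
          simp only [Set.mem_setOf_eq, and_iff_left_iff_imp]
          intro hn
          have := hψlt e (edgeNbhd_subset' hn)
          omega
        rw [hseq] at hc
        have := ncard_nbhd hT hE huv
        omega
      | (n+1) =>
        have hseq : {e | e ∈ edgeNbhd T u v ∧ ψ e = n + 1} = ∅ := by
          ext e
          simp only [Set.mem_setOf_eq, Set.mem_empty_iff_false, iff_false, not_and]
          intro hn
          have := hψlt e (edgeNbhd_subset' hn)
          omega
        rw [hseq, Set.ncard_empty] at hc
        omega
end
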